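/- arXiv:1510.07189 — 2 statements merged into one kernel-verified Lean document; each statement's English description precedes it below -/
import Mathlib

section
/- Let J₀ ⊇ J₁ ⊇ ⋯ ⊇ J_L be non-empty closed intervals with |J_ℓ|/|J_{ℓ−1}| ≤ q̄ < 1 for all ℓ ∈ [1:L], write h_ℓ := |J_ℓ|/2, and let κ, c₀,…,c_L ∈ ℝ satisfy |κ h_{ℓ−1}(c_{ℓ−1}−c_ℓ)| ≤ γ for all ℓ ∈ [1:L], where γ ≥ 0. Fix q ∈ (q̄,1). Then there exists m₀ > 0, depending only on γ, q̄, and q, such that for all m ≥ m₀, with ε_{m,L} := (1 + (1+Λ_m)q^m)^L − 1: (a) ‖(Id − 𝕀_L∘⋯∘𝕀₁)[exp(iκc₀·)π]‖_{∞,J_L} ≤ ε_{m,L}·‖exp(iκc₀·)π‖_{∞,J₀} for all π ∈ Π_m; (b) the operator norm of 𝕀_L∘⋯∘𝕀₀ from C(J₀) to C(J_L) (with the respective maximum norms) is at most Λ_m(1 + ε_{m,L}). -/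
set_option maxHeartbeats 1000000


open Complex Set

/-- Lagrange polynomial `L_ν(z) = ∏_{μ≠ν} (z−ξ_μ)/(ξ_ν−ξ_μ)` for nodes `ξ` on `[−1,1]`. -/
noncomputable def lagrangeC {m : ℕ} (ξ : Fin (m + 1) → ℝ) (ν : Fin (m + 1)) (z : ℂ) : ℂ :=
  ∏ μ ∈ Finset.univ.erase ν, (z - (ξ μ : ℂ)) / ((ξ ν : ℂ) - (ξ μ : ℂ))

/-- Interpolation operator `𝕀[f] = Σ_ν f(ξ_ν)·L_ν` on `[−1,1]`. -/
noncomputable def interpC {m : ℕ} (ξ : Fin (m + 1) → ℝ) (f : ℝ → ℂ) (x : ℝ) : ℂ :=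
  ∑ ν, f (ξ ν) * lagrangeC ξ ν (x : ℂ)

/-- The maximum norm `‖f‖_{∞,s}` of a function on a set. -/
noncomputable def supNormOn (f : ℝ → ℂ) (s : Set ℝ) : ℝ :=
  sSup ((fun x => ‖f x‖) '' s)

/-- The Lebesgue constant `Λ_m = sup{‖𝕀[f]‖_{∞,[−1,1]}/‖f‖_{∞,[−1,1]} : f ∈ C[−1,1] \ {0}}`. -/
noncomputable def lebesgueConst {m : ℕ} (ξ : Fin (m + 1) → ℝ) : ℝ :=
  sSup {r : ℝ | ∃ f : ℝ → ℂ, ContinuousOn f (Set.Icc (-1) 1) ∧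
    (∃ x ∈ Set.Icc (-1 : ℝ) 1, f x ≠ 0) ∧
    r = supNormOn (interpC ξ f) (Set.Icc (-1) 1) / supNormOn f (Set.Icc (-1) 1)}

/-- The affine map `Φ_{[a,b]}(t) = (b+a)/2 + (b−a)/2·t` taking `[−1,1]` to `[a,b]`. -/
noncomputable def phiAB (a b t : ℝ) : ℝ := (b + a) / 2 + (b - a) / 2 * t

/-- The inverse `Φ_{[a,b]}^{−1}(x) = (2x − a − b)/(b − a)`. -/
noncomputable def phiInvAB (a b x : ℝ) : ℝ := (2 * x - (a + b)) / (b - a)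

/-- Transformed interpolation operator `𝕀_{[a,b]}` on the interval `[a,b]`. -/
noncomputable def interpOn {m : ℕ} (ξ : Fin (m + 1) → ℝ) (a b : ℝ) (f : ℝ → ℂ) (x : ℝ) : ℂ :=
  ∑ ν, f (phiAB a b (ξ ν)) * lagrangeC ξ ν ((phiInvAB a b x : ℝ) : ℂ)

/-- The weighted (directional) interpolation operator
`𝕀_{[a,b],c}[f] = exp(iκc·)·𝕀_{[a,b]}[exp(−iκc·)f]`. -/
noncomputable def wInterp {m : ℕ} (ξ : Fin (m + 1) → ℝ) (a b κ c : ℝ) (f : ℝ → ℂ) (x : ℝ) : ℂ :=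
  Complex.exp (Complex.I * (κ : ℂ) * (c : ℂ) * (x : ℂ)) *
    interpOn ξ a b (fun y => Complex.exp (-(Complex.I * (κ : ℂ) * (c : ℂ) * (y : ℂ))) * f y) x

/-- The iterated weighted interpolation operator `𝕀_ℓ ∘ ⋯ ∘ 𝕀_1` (the identity if `ℓ = 0`),
where `𝕀_j` is the weighted interpolation operator of the interval `J_j = [A j, B j]`
with direction `c j`. -/
noncomputable def iterW {m : ℕ} (ξ : Fin (m + 1) → ℝ) (A B : ℕ → ℝ) (κ : ℝ) (c : ℕ → ℝ) :
    ℕ → (ℝ → ℂ) → (ℝ → ℂ)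
  | 0 => fun f => f
  | ℓ + 1 => fun f => wInterp ξ (A (ℓ + 1)) (B (ℓ + 1)) κ (c (ℓ + 1)) (iterW ξ A B κ c ℓ f)

/-! ### compatibility: `Complex.abs` as the norm -/

noncomputable def Complex.abs : AbsoluteValue ℂ ℝ where
  toFun z := ‖z‖
  map_mul' := norm_mul
  nonneg' := norm_nonneg
  eq_zero' _ := norm_eq_zero
  add_le' := norm_add_le

lemma Complex.abs_apply' (z : ℂ) : Complex.abs z = ‖z‖ := rfl

lemma Complex.norm_eq_abs (z : ℂ) : ‖z‖ = Complex.abs z := rfl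

@[simp] lemma Complex.abs_ofReal (r : ℝ) : Complex.abs (r : ℂ) = |r| := Complex.norm_real r

@[simp] lemma Complex.abs_I : Complex.abs Complex.I = 1 := Complex.norm_I

@[simp] lemma Complex.abs_two : Complex.abs 2 = 2 := by
  rw [Complex.abs_apply']; norm_num

@[simp] lemma Complex.abs_exp (z : ℂ) : Complex.abs (Complex.exp z) = Real.exp z.re :=
  Complex.norm_exp z

lemma Complex.abs_exp_ofReal_mul_I (x : ℝ) : Complex.abs (Complex.exp (x * Complex.I)) = 1 :=
  Complex.norm_exp_ofReal_mul_I x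

lemma Complex.abs_re_le_abs (z : ℂ) : |z.re| ≤ Complex.abs z := Complex.abs_re_le_norm z

lemma Complex.abs_im_le_abs (z : ℂ) : |z.im| ≤ Complex.abs z := Complex.abs_im_le_norm z

lemma Complex.normSq_eq_abs (x : ℂ) : Complex.normSq x = Complex.abs x ^ 2 :=
  Complex.normSq_eq_norm_sq x

lemma Complex.continuous_abs : Continuous Complex.abs := continuous_norm

lemma Complex.abs.sub_le_add (a b : ℂ) : Complex.abs (a - b) ≤ Complex.abs a + Complex.abs b :=
  norm_sub_le a b

/-! ### supNormOn toolkit -/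

lemma supNormOn_nonneg (f : ℝ → ℂ) (s : Set ℝ) : 0 ≤ supNormOn f s := by
  apply Real.sSup_nonneg
  rintro x ⟨y, _, rfl⟩
  exact norm_nonneg _

lemma bddAbove_absImage {f : ℝ → ℂ} {a b : ℝ} (hf : ContinuousOn f (Icc a b)) :
    BddAbove ((fun x => Complex.abs (f x)) '' Icc a b) :=
  isCompact_Icc.bddAbove_image (Complex.continuous_abs.comp_continuousOn hf)

lemma le_supNormOn {f : ℝ → ℂ} {s : Set ℝ} (hb : BddAbove ((fun x => Complex.abs (f x)) '' s))
    {x : ℝ} (hx : x ∈ s) : Complex.abs (f x) ≤ supNormOn f s :=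
  le_csSup hb ⟨x, hx, rfl⟩

lemma supNormOn_le {f : ℝ → ℂ} {s : Set ℝ} {C : ℝ} (hC : 0 ≤ C)
    (h : ∀ x ∈ s, Complex.abs (f x) ≤ C) : supNormOn f s ≤ C := by
  apply Real.sSup_le _ hC
  rintro r ⟨y, hy, rfl⟩
  exact h y hy

lemma supNormOn_congr {f g : ℝ → ℂ} {s : Set ℝ}
    (h : ∀ x ∈ s, Complex.abs (f x) = Complex.abs (g x)) : supNormOn f s = supNormOn g s := by
  unfold supNormOn
  congr 1
  exact Set.image_congr h

lemma supNormOn_mono {f : ℝ → ℂ} {s t : Set ℝ}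
    (hb : BddAbove ((fun x => Complex.abs (f x)) '' t)) (hst : s ⊆ t) :
    supNormOn f s ≤ supNormOn f t := by
  apply Real.sSup_le _ (supNormOn_nonneg f t)
  rintro r ⟨y, hy, rfl⟩
  exact le_supNormOn hb (hst hy)

/-! ### interpC and Lagrange -/

lemma lagrangeC_eq_basis {m : ℕ} (ξ : Fin (m + 1) → ℝ) (ν : Fin (m + 1)) (z : ℂ) :
    lagrangeC ξ ν z =
      (Lagrange.basis Finset.univ (fun μ => (ξ μ : ℂ)) ν).eval z := by
  unfold lagrangeC Lagrange.basis
  rw [Polynomial.eval_prod]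
  refine Finset.prod_congr rfl fun μ _ => ?_
  unfold Lagrange.basisDivisor
  simp [div_eq_inv_mul, mul_comm]

lemma interpC_eq_eval {m : ℕ} (ξ : Fin (m + 1) → ℝ) (f : ℝ → ℂ) (x : ℝ) :
    interpC ξ f x =
      (Lagrange.interpolate Finset.univ (fun μ => (ξ μ : ℂ)) (fun ν => f (ξ ν))).eval (x : ℂ) := by
  unfold interpC Lagrange.interpolate
  simp only [LinearMap.coe_mk, AddHom.coe_mk, Polynomial.eval_finset_sum, Polynomial.eval_mul,
    Polynomial.eval_C]
  exact Finset.sum_congr rfl fun ν _ => by rw [lagrangeC_eq_basis]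

lemma injOn_castξ {m : ℕ} {ξ : Fin (m + 1) → ℝ} (hinj : Function.Injective ξ) :
    Set.InjOn (fun μ => ((ξ μ : ℝ) : ℂ)) (Finset.univ : Finset (Fin (m + 1))) := by
  intro i _ j _ h
  exact hinj (Complex.ofReal_injective (by simpa using h))

/-- Interpolation reproduces polynomials of degree at most `m`. -/
lemma interpC_poly {m : ℕ} {ξ : Fin (m + 1) → ℝ} (hinj : Function.Injective ξ)
    {p : Polynomial ℂ} (hdeg : p.natDegree ≤ m) (x : ℝ) :
    interpC ξ (fun t : ℝ => p.eval (t : ℂ)) x = p.eval (x : ℂ) := by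
  rw [interpC_eq_eval]
  have hlt : p.degree < (Finset.univ : Finset (Fin (m + 1))).card := by
    simp only [Finset.card_univ, Fintype.card_fin]
    exact lt_of_le_of_lt Polynomial.degree_le_natDegree (by exact_mod_cast Nat.lt_succ_of_le hdeg)
  have := Lagrange.eq_interpolate (injOn_castξ hinj) hlt
  rw [← this]

lemma interpC_sub {m : ℕ} (ξ : Fin (m + 1) → ℝ) (f g : ℝ → ℂ) (x : ℝ) :
    interpC ξ (fun t => f t - g t) x = interpC ξ f x - interpC ξ g x := by
  unfold interpC
  rw [← Finset.sum_sub_distrib]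
  exact Finset.sum_congr rfl fun ν _ => by ring

lemma continuous_interpC {m : ℕ} (ξ : Fin (m + 1) → ℝ) (f : ℝ → ℂ) :
    Continuous (interpC ξ f) := by
  have : interpC ξ f = fun x : ℝ =>
      (Lagrange.interpolate Finset.univ (fun μ => (ξ μ : ℂ)) (fun ν => f (ξ ν))).eval (x : ℂ) :=
    funext fun x => interpC_eq_eval ξ f x
  rw [this]
  exact (Polynomial.continuous _).comp Complex.continuous_ofReal

/-! ### Lebesgue constant -/

lemma lebesgue_mem_nonempty {m : ℕ} (ξ : Fin (m + 1) → ℝ) :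
    {r : ℝ | ∃ f : ℝ → ℂ, ContinuousOn f (Set.Icc (-1) 1) ∧
      (∃ x ∈ Set.Icc (-1 : ℝ) 1, f x ≠ 0) ∧
      r = supNormOn (interpC ξ f) (Set.Icc (-1) 1) / supNormOn f (Set.Icc (-1) 1)}.Nonempty := by
  exact ⟨_, ⟨(fun _ => (1 : ℂ)), continuousOn_const, ⟨0, by norm_num, one_ne_zero⟩, rfl⟩⟩

noncomputable def lebC {m : ℕ} (ξ : Fin (m + 1) → ℝ) : ℝ :=
  sSup ((fun x : ℝ => ∑ ν, Complex.abs (lagrangeC ξ ν (x : ℂ))) '' Icc (-1) 1)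

lemma sum_abs_lagrange_le {m : ℕ} (ξ : Fin (m + 1) → ℝ) {x : ℝ} (hx : x ∈ Icc (-1:ℝ) 1) :
    ∑ ν, Complex.abs (lagrangeC ξ ν (x : ℂ)) ≤ lebC ξ := by
  have hb : BddAbove ((fun x : ℝ => ∑ ν, Complex.abs (lagrangeC ξ ν (x : ℂ))) '' Icc (-1) 1) := by
    apply isCompact_Icc.bddAbove_image
    apply continuousOn_finset_sum
    intro ν _
    apply Complex.continuous_abs.comp_continuousOn
    apply Continuous.continuousOn
    have : (fun x : ℝ => lagrangeC ξ ν (x : ℂ)) =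
        fun x : ℝ => (Lagrange.basis Finset.univ (fun μ => (ξ μ : ℂ)) ν).eval (x : ℂ) :=
      funext fun x => lagrangeC_eq_basis ξ ν x
    rw [this]
    exact (Polynomial.continuous _).comp Complex.continuous_ofReal
  exact le_csSup hb ⟨x, hx, rfl⟩

lemma interpC_le_lebC {m : ℕ} (ξ : Fin (m + 1) → ℝ) (hξ : ∀ ν, ξ ν ∈ Icc (-1:ℝ) 1)
    {f : ℝ → ℂ} (hf : ContinuousOn f (Icc (-1) 1)) :
    supNormOn (interpC ξ f) (Icc (-1) 1) ≤ lebC ξ * supNormOn f (Icc (-1) 1) := by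
  have h0 : 0 ≤ lebC ξ := by
    apply Real.sSup_nonneg
    rintro r ⟨y, _, rfl⟩
    exact Finset.sum_nonneg fun ν _ => AbsoluteValue.nonneg _ _
  apply supNormOn_le (mul_nonneg h0 (supNormOn_nonneg _ _))
  intro x hx
  calc Complex.abs (interpC ξ f x) ≤ ∑ ν, Complex.abs (f (ξ ν) * lagrangeC ξ ν (x : ℂ)) := by
        unfold interpC; exact AbsoluteValue.sum_le _ _ _
    _ ≤ ∑ ν, supNormOn f (Icc (-1) 1) * Complex.abs (lagrangeC ξ ν (x : ℂ)) := by
        apply Finset.sum_le_sum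
        intro ν _
        rw [map_mul]
        exact mul_le_mul_of_nonneg_right (le_supNormOn (bddAbove_absImage hf) (hξ ν))
          (AbsoluteValue.nonneg _ _)
    _ = supNormOn f (Icc (-1) 1) * ∑ ν, Complex.abs (lagrangeC ξ ν (x : ℂ)) := by
        rw [Finset.mul_sum]
    _ ≤ lebC ξ * supNormOn f (Icc (-1) 1) := by
        rw [mul_comm]
        exact mul_le_mul_of_nonneg_right (sum_abs_lagrange_le ξ hx) (supNormOn_nonneg _ _)

lemma lebesgue_bddAbove {m : ℕ} (ξ : Fin (m + 1) → ℝ) (hξ : ∀ ν, ξ ν ∈ Icc (-1:ℝ) 1) :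
    BddAbove {r : ℝ | ∃ f : ℝ → ℂ, ContinuousOn f (Set.Icc (-1) 1) ∧
      (∃ x ∈ Set.Icc (-1 : ℝ) 1, f x ≠ 0) ∧
      r = supNormOn (interpC ξ f) (Set.Icc (-1) 1) / supNormOn f (Set.Icc (-1) 1)} := by
  refine ⟨lebC ξ, ?_⟩
  rintro r ⟨f, hf, ⟨x, hx, hfx⟩, rfl⟩
  have hpos : 0 < supNormOn f (Icc (-1) 1) :=
    lt_of_lt_of_le (AbsoluteValue.pos _ hfx) (le_supNormOn (bddAbove_absImage hf) hx)
  rw [div_le_iff₀ hpos]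
  exact interpC_le_lebC ξ hξ hf

lemma lebesgueConst_nonneg {m : ℕ} (ξ : Fin (m + 1) → ℝ) (hξ : ∀ ν, ξ ν ∈ Icc (-1:ℝ) 1) :
    0 ≤ lebesgueConst ξ := by
  obtain ⟨r, hr⟩ := lebesgue_mem_nonempty ξ
  have h0 : 0 ≤ r := by
    obtain ⟨f, _, _, rfl⟩ := hr
    exact div_nonneg (supNormOn_nonneg _ _) (supNormOn_nonneg _ _)
  exact le_trans h0 (le_csSup (lebesgue_bddAbove ξ hξ) hr)

/-- The fundamental property of the Lebesgue constant. -/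
lemma interpC_le_lebesgue {m : ℕ} (ξ : Fin (m + 1) → ℝ) (hξ : ∀ ν, ξ ν ∈ Icc (-1:ℝ) 1)
    {f : ℝ → ℂ} (hf : ContinuousOn f (Icc (-1) 1)) :
    supNormOn (interpC ξ f) (Icc (-1) 1) ≤ lebesgueConst ξ * supNormOn f (Icc (-1) 1) := by
  by_cases hz : ∃ x ∈ Icc (-1:ℝ) 1, f x ≠ 0
  · obtain ⟨x, hx, hfx⟩ := hz
    have hpos : 0 < supNormOn f (Icc (-1) 1) :=
      lt_of_lt_of_le (AbsoluteValue.pos _ hfx) (le_supNormOn (bddAbove_absImage hf) hx)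
    have hmem : supNormOn (interpC ξ f) (Set.Icc (-1) 1) / supNormOn f (Set.Icc (-1) 1) ≤
        lebesgueConst ξ :=
      le_csSup (lebesgue_bddAbove ξ hξ) ⟨f, hf, ⟨x, hx, hfx⟩, rfl⟩
    calc supNormOn (interpC ξ f) (Icc (-1) 1)
        = supNormOn (interpC ξ f) (Icc (-1) 1) / supNormOn f (Icc (-1) 1)
          * supNormOn f (Icc (-1) 1) := by field_simp
      _ ≤ lebesgueConst ξ * supNormOn f (Icc (-1) 1) :=
          mul_le_mul_of_nonneg_right hmem (le_of_lt hpos)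
  · push_neg at hz
    have hnodes : ∀ ν, f (ξ ν) = 0 := fun ν => hz _ (hξ ν)
    have : ∀ x ∈ Icc (-1:ℝ) 1, Complex.abs (interpC ξ f x) ≤ 0 := by
      intro x _
      unfold interpC
      simp [hnodes]
    have h1 : supNormOn (interpC ξ f) (Icc (-1) 1) ≤ 0 := supNormOn_le le_rfl this
    exact le_trans h1 (mul_nonneg (lebesgueConst_nonneg ξ hξ) (supNormOn_nonneg _ _))
open Complex Set Polynomial

/-- Joukowski pairs: every `z` is `(u+u⁻¹)/2` with `|u| ≤ 1` and `|u⁻¹| ≤ 2|z|+1`. -/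
lemma exists_jouk_inner (z : ℂ) : ∃ u : ℂ, u ≠ 0 ∧ Complex.abs u ≤ 1 ∧
    (u + u⁻¹) / 2 = z ∧ Complex.abs u⁻¹ ≤ 2 * Complex.abs z + 1 := by
  obtain ⟨s, hs⟩ := IsAlgClosed.exists_pow_nat_eq (k := ℂ) (z ^ 2 - 1) (n := 2) (by norm_num)
  have habs_s : Complex.abs s ≤ Complex.abs z + 1 := by
    have h2 : Complex.abs s ^ 2 = Complex.abs (z ^ 2 - 1) := by
      rw [← map_pow, hs]
    have hzz : Complex.abs (z ^ 2 - 1) ≤ Complex.abs z ^ 2 + 1 := by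
      have h := Complex.abs.add_le (z ^ 2) (-1)
      rw [← sub_eq_add_neg] at h
      simpa [map_pow] using h
    nlinarith [Complex.abs.nonneg s, Complex.abs.nonneg z]
  have hmul : (z + s) * (z - s) = 1 := by linear_combination -hs
  have hmul' : (z - s) * (z + s) = 1 := by linear_combination -hs
  have hne1 : z + s ≠ 0 := fun h => by simp [h] at hmul
  have hne2 : z - s ≠ 0 := fun h => by simp [h] at hmul
  have hinv : (z + s)⁻¹ = z - s := inv_eq_of_mul_eq_one_right hmul
  have hinv2 : (z - s)⁻¹ = z + s := inv_eq_of_mul_eq_one_right hmul'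
  have habs : Complex.abs (z + s) * Complex.abs (z - s) = 1 := by
    rw [← map_mul, hmul, map_one]
  have hboth : Complex.abs (z + s) ≤ 2 * Complex.abs z + 1 ∧
      Complex.abs (z - s) ≤ 2 * Complex.abs z + 1 := by
    constructor
    · calc Complex.abs (z + s) ≤ Complex.abs z + Complex.abs s := Complex.abs.add_le _ _
        _ ≤ 2 * Complex.abs z + 1 := by linarith
    · calc Complex.abs (z - s) ≤ Complex.abs z + Complex.abs s := Complex.abs.sub_le_add _ _
        _ ≤ 2 * Complex.abs z + 1 := by linarith
  rcases le_total (Complex.abs (z + s)) 1 with h | h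
  · refine ⟨z + s, hne1, h, ?_, ?_⟩
    · rw [hinv]; ring
    · rw [hinv]; exact hboth.2
  · refine ⟨z - s, hne2, ?_, ?_, ?_⟩
    · by_contra hgt
      push_neg at hgt
      nlinarith [Complex.abs.nonneg (z+s), Complex.abs.nonneg (z-s)]
    · rw [hinv2]; ring
    · rw [hinv2]; exact hboth.1
  
/-- Joukowski outer root: for `|z| = R`, there is `u` with `|u| ≥ 2R − 1`, `|u⁻¹| ≤ 1`. -/
lemma exists_jouk_outer (z : ℂ) (R : ℝ) (hR : 1 ≤ R) (hz : Complex.abs z = R) :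
    ∃ u : ℂ, u ≠ 0 ∧ 2 * R - 1 ≤ Complex.abs u ∧ Complex.abs u⁻¹ ≤ 1 ∧
      (u + u⁻¹) / 2 = z := by
  obtain ⟨u, hu0, hu1, huz, _⟩ := exists_jouk_inner z
  have hu0' : Complex.abs u ≠ 0 := by simpa using hu0
  refine ⟨u⁻¹, inv_ne_zero hu0, ?_, by simpa [map_inv₀] using hu1, by rw [inv_inv]; rw [← huz]; ring⟩
  have : Complex.abs (u⁻¹) ≥ 2 * Complex.abs z - Complex.abs u := by
    have := Complex.abs.add_le u u⁻¹
    have h2 : Complex.abs (u + u⁻¹) = 2 * Complex.abs z := by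
      have : u + u⁻¹ = 2 * z := by rw [← huz]; ring
      rw [this, map_mul]; simp
    linarith
  rw [hz] at this
  linarith

/-- Bernstein-type growth bound for complex polynomials bounded on `[−1,1]`. -/
lemma bernstein_growth {Q : Polynomial ℂ} {m : ℕ} (hdeg : Q.natDegree ≤ m) {M : ℝ}
    (hM : ∀ x : ℝ, x ∈ Icc (-1:ℝ) 1 → Complex.abs (Q.eval (x:ℂ)) ≤ M) (z : ℂ) :
    Complex.abs (Q.eval z) ≤ M * (2 * Complex.abs z + 1) ^ m := by
  have hM0 : 0 ≤ M := le_trans (Complex.abs.nonneg _) (hM 0 (by norm_num))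
  -- the reflected polynomial
  set Rp : Polynomial ℂ :=
    ∑ k ∈ Finset.range (m + 1), C (Q.coeff k / 2 ^ k) * (X ^ 2 + 1) ^ k * X ^ (m - k) with hRp
  have hvalRp : ∀ u : ℂ, u ≠ 0 → Rp.eval u = u ^ m * Q.eval ((u + u⁻¹) / 2) := by
    intro u hu
    have hQe : Q.eval ((u + u⁻¹)/2) =
        ∑ k ∈ Finset.range (m + 1), Q.coeff k * ((u + u⁻¹)/2) ^ k :=
      eval_eq_sum_range' (Nat.lt_succ_of_le hdeg) _
    rw [hRp, eval_finset_sum, hQe, Finset.mul_sum]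
    refine Finset.sum_congr rfl fun k hk => ?_
    have hk' : k ≤ m := Nat.lt_succ_iff.mp (Finset.mem_range.mp hk)
    simp only [eval_mul, eval_pow, eval_add, eval_C, eval_X, eval_one]
    have hums : u ^ m = u ^ (m - k) * u ^ k := by rw [← pow_add]; congr 1; omega
    have h1 : (u + u⁻¹) / 2 = (u ^ 2 + 1) / (2 * u) := by
      field_simp
    rw [h1, div_pow, hums, mul_pow]
    have hu2 : (2 : ℂ) ^ k ≠ 0 := pow_ne_zero _ two_ne_zero
    have huk : u ^ k ≠ 0 := pow_ne_zero _ hu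
    field_simp
  -- max modulus on the closed unit disk
  have hmax : ∀ u : ℂ, Complex.abs u ≤ 1 → Complex.abs (Rp.eval u) ≤ M := by
    intro u hu
    rw [← Complex.norm_eq_abs]
    have hcl : u ∈ closure (Metric.ball (0:ℂ) 1) := by
      rw [closure_ball (0:ℂ) one_ne_zero]
      simpa [Metric.mem_closedBall, Complex.dist_eq, Complex.abs_apply'] using hu
    refine Complex.norm_le_of_forall_mem_frontier_norm_le (Metric.isBounded_ball)
      ((Rp.differentiable).diffContOnCl) ?_ hcl
    intro v hv
    rw [frontier_ball (0:ℂ) one_ne_zero] at hv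
    have hv1 : Complex.abs v = 1 := by simpa [Complex.dist_eq, Complex.abs_apply'] using hv
    have hv0 : v ≠ 0 := by intro h; rw [h] at hv1; simp at hv1
    have hvinv : v⁻¹ = starRingEnd ℂ v := by
      rw [Complex.inv_def]
      rw [Complex.normSq_eq_abs, hv1]
      simp
    have hre : (v + v⁻¹) / 2 = ((v.re : ℝ) : ℂ) := by
      rw [hvinv, Complex.add_conj]
      push_cast
      ring
    have hrev : |v.re| ≤ 1 := by
      rw [← hv1]; exact Complex.abs_re_le_abs v
    have := hM v.re (abs_le.mp hrev)
    rw [Complex.norm_eq_abs, hvalRp v hv0, map_mul, map_pow, hv1, one_pow, one_mul, hre]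
    exact this
  -- combine
  obtain ⟨u, hu0, hu1, huz, huinv⟩ := exists_jouk_inner z
  have h1 : Rp.eval u = u ^ m * Q.eval z := by rw [hvalRp u hu0, huz]
  have h2 : Complex.abs (Q.eval z) = Complex.abs (Rp.eval u) * (Complex.abs u⁻¹) ^ m := by
    rw [h1, map_mul, map_pow]
    rw [map_inv₀]
    have hau : Complex.abs u ≠ 0 := by simpa using hu0
    field_simp
    rw [one_div, inv_pow, mul_assoc, mul_inv_cancel₀ (pow_ne_zero _ hau), mul_one]
  rw [h2]
  exact mul_le_mul (hmax u hu1) (pow_le_pow_left₀ (Complex.abs.nonneg _) huinv m)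
    (pow_nonneg (Complex.abs.nonneg _) m) hM0

/-! ### Chebyshev facts -/

lemma natDegree_T_le : ∀ n : ℕ, (Polynomial.Chebyshev.T ℂ n).natDegree ≤ n := by
  intro n
  induction n using Nat.twoStepInduction with
  | zero => simp [Polynomial.Chebyshev.T_zero]
  | one => simp [Polynomial.Chebyshev.T_one]
  | more n ih1 ih2 =>
    have e2 : ((n + 2 : ℕ) : ℤ) = (n : ℤ) + 2 := by push_cast; ring
    have e1 : ((n + 1 : ℕ) : ℤ) = (n : ℤ) + 1 := by push_cast; ring
    rw [e2, Polynomial.Chebyshev.T_add_two, ← e1]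
    refine le_trans (natDegree_sub_le _ _) ?_
    rw [max_le_iff]
    have h2X : (2 * X : Polynomial ℂ).natDegree ≤ 1 := le_trans natDegree_mul_le (by simp)
    have hmul := natDegree_mul_le (p := (2 * X : Polynomial ℂ))
      (q := Polynomial.Chebyshev.T ℂ ((n + 1 : ℕ) : ℤ))
    exact ⟨le_trans hmul (by omega), by omega⟩

lemma T_eval_jouk (n : ℕ) (u : ℂ) (hu : u ≠ 0) :
    (Polynomial.Chebyshev.T ℂ n).eval ((u + u⁻¹) / 2) = (u ^ n + u⁻¹ ^ n) / 2 := by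
  have hcosdef : ∀ w : ℂ, Complex.cos w = (Complex.exp (w * Complex.I)
      + Complex.exp (-w * Complex.I)) / 2 := fun w => rfl
  set θ : ℂ := -Complex.I * Complex.log u with hθ
  have hexp : Complex.exp (θ * Complex.I) = u := by
    rw [hθ, show -Complex.I * Complex.log u * Complex.I
      = -(Complex.I * Complex.I) * Complex.log u by ring, Complex.I_mul_I, neg_neg, one_mul]
    exact Complex.exp_log hu
  have hexpneg : Complex.exp (-θ * Complex.I) = u⁻¹ := by
    rw [show -θ * Complex.I = -(θ * Complex.I) by ring, Complex.exp_neg, hexp]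
  have hcos : Complex.cos θ = (u + u⁻¹) / 2 := by
    rw [hcosdef, hexp, hexpneg]
  have hcosn : Complex.cos ((n : ℂ) * θ) = (u ^ n + u⁻¹ ^ n) / 2 := by
    rw [hcosdef]
    have h1 : (n : ℂ) * θ * Complex.I = (n : ℕ) * (θ * Complex.I) := by push_cast; ring
    have h2 : -((n:ℂ) * θ) * Complex.I = (n : ℕ) * (-θ * Complex.I) := by push_cast; ring
    rw [h1, h2, Complex.exp_nat_mul, Complex.exp_nat_mul, hexp, hexpneg]
  rw [← hcos, Polynomial.Chebyshev.T_complex_cos θ n, ← hcosn]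
  norm_num

lemma T_abs_le_one (n : ℕ) {x : ℝ} (hx : x ∈ Icc (-1:ℝ) 1) :
    Complex.abs ((Polynomial.Chebyshev.T ℂ n).eval (x : ℂ)) ≤ 1 := by
  rw [← Polynomial.Chebyshev.complex_ofReal_eval_T x n, Complex.abs_ofReal]
  nth_rewrite 1 [show x = Real.cos (Real.arccos x) from (Real.cos_arccos hx.1 hx.2).symm]
  rw [Polynomial.Chebyshev.T_real_cos]
  exact Real.abs_cos_le_one _

lemma T_abs_ge (n : ℕ) (R : ℝ) (hR : 1 ≤ R) (t : ℂ) (ht : Complex.abs t = R) :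
    ((2 * R - 1) ^ n - 1) / 2 ≤ Complex.abs ((Polynomial.Chebyshev.T ℂ n).eval t) := by
  obtain ⟨u, hu0, huge, huinv, huz⟩ := exists_jouk_outer t R hR ht
  rw [← huz, T_eval_jouk n u hu0]
  have h1 : Complex.abs (u ^ n + u⁻¹ ^ n) ≥ (2*R-1) ^ n - 1 := by
    have := Complex.abs.add_le (u ^ n + u⁻¹ ^ n) (-(u⁻¹ ^ n))
    simp only [add_neg_cancel_right, map_neg_eq_map] at this
    have h2 : Complex.abs (u⁻¹ ^ n) ≤ 1 := by
      rw [map_pow]; exact pow_le_one₀ (Complex.abs.nonneg _) huinv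
    have h3 : (2*R-1)^n ≤ Complex.abs (u ^ n) := by
      rw [map_pow]; exact pow_le_pow_left₀ (by linarith) huge n
    linarith
  rw [map_div₀]
  simp only [Complex.abs_two]
  linarith
open Complex Set Polynomial Metric

lemma circ_congr {R : ℝ} (hR : 0 ≤ R) (f h : ℂ → ℂ)
    (hfh : ∀ t ∈ sphere (0:ℂ) R, f t = h t) :
    (∮ t in C(0, R), f t) = ∮ t in C(0, R), h t := by
  simp only [circleIntegral]
  apply intervalIntegral.integral_congr
  intro θ _
  simp only
  rw [hfh _ (circleMap_mem_sphere 0 hR θ)]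

lemma circ_sum {R : ℝ} {ι : Type*} (s : Finset ι) (f : ι → ℂ → ℂ)
    (hf : ∀ i ∈ s, CircleIntegrable (f i) 0 R) :
    (∮ t in C(0, R), ∑ i ∈ s, f i t) = ∑ i ∈ s, ∮ t in C(0, R), f i t := by
  simp only [circleIntegral, Finset.smul_sum]
  exact intervalIntegral.integral_finset_sum (fun i hi => (hf i hi).out)

lemma approx_poly (g : ℂ → ℂ) (hg : Differentiable ℂ g) (m : ℕ) (ω : Polynomial ℂ)
    (hω : ω.natDegree ≤ m + 1) (R Mg ε : ℝ) (hR : 1 < R) (hε : 0 < ε)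
    (hMg : ∀ t : ℂ, Complex.abs t = R → Complex.abs (g t) ≤ Mg)
    (hωt : ∀ t : ℂ, Complex.abs t = R → ε ≤ Complex.abs (ω.eval t)) :
    ∃ p : Polynomial ℂ, p.natDegree ≤ m ∧ ∀ x : ℂ, Complex.abs x ≤ 1 →
      Complex.abs (g x - p.eval x) ≤ R / (R - 1) * Mg * (Complex.abs (ω.eval x) / ε) := by
  have hR0 : (0:ℝ) < R := lt_trans one_pos hR
  have hsph : ∀ t : ℂ, t ∈ sphere (0:ℂ) R ↔ Complex.abs t = R := by
    intro t; rw [mem_sphere_zero_iff_norm]; rfl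
  have hω0 : ∀ t : ℂ, Complex.abs t = R → ω.eval t ≠ 0 := by
    intro t ht h0
    have hq := hωt t ht
    rw [h0] at hq
    simp at hq
    linarith
  set cj : ℕ → ℂ → ℂ := fun j t =>
    ∑ k ∈ Finset.range (m+2), if j < k then ω.coeff k * t ^ (k-1-j) else 0 with hcj
  set F : ℂ → ℂ := fun t => (ω.eval t)⁻¹ * g t with hF
  -- continuity facts
  have hcjcont : ∀ j, Continuous (cj j) := by
    intro j
    apply continuous_finset_sum
    intro k _
    by_cases hjk : j < k
    · simp only [hjk, if_true]
      exact continuous_const.mul (continuous_pow _)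
    · simp only [hjk, if_false]
      exact continuous_const
  have hFcont : ContinuousOn F (sphere (0:ℂ) R) := by
    apply ContinuousOn.mul
    · apply ContinuousOn.inv₀
      · exact (Polynomial.continuous ω).continuousOn
      · intro t ht
        exact hω0 t ((hsph t).mp ht)
    · exact hg.continuous.continuousOn
  have hint : ∀ j, CircleIntegrable (fun t => F t * cj j t) 0 R := by
    intro j
    apply ContinuousOn.circleIntegrable (le_of_lt hR0)
    exact hFcont.mul (hcjcont j).continuousOn
  -- the geometric-sum identity
  have key : ∀ t x : ℂ, (∑ j ∈ Finset.range (m+1), cj j t * x ^ j) * (t - x)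
      = ω.eval t - ω.eval x := by
    intro t x
    have hev : ∀ y : ℂ, ω.eval y = ∑ k ∈ Finset.range (m+2), ω.coeff k * y ^ k :=
      fun y => eval_eq_sum_range' (Nat.lt_succ_of_le hω) y
    have blockk : ∀ k : ℕ, (∑ j ∈ Finset.range k, t ^ (k-1-j) * x ^ j) * (t - x)
        = t ^ k - x ^ k := by
      intro k
      have hre : ∑ j ∈ Finset.range k, t ^ (k-1-j) * x ^ j
          = ∑ j ∈ Finset.range k, t ^ j * x ^ (k-1-j) := by
        rw [← Finset.sum_range_reflect (fun j => t ^ (k-1-j) * x ^ j) k]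
        apply Finset.sum_congr rfl
        intro j hj
        have hj' := Finset.mem_range.mp hj
        have h1 : k - 1 - (k - 1 - j) = j := by omega
        rw [h1]
      rw [hre]
      exact geom_sum₂_mul t x k
    have swap : (∑ j ∈ Finset.range (m+1), cj j t * x ^ j)
        = ∑ k ∈ Finset.range (m+2), ω.coeff k * ∑ j ∈ Finset.range k, t ^ (k-1-j) * x ^ j := by
      rw [hcj]
      simp only [Finset.sum_mul, ite_mul, zero_mul]
      rw [Finset.sum_comm]
      apply Finset.sum_congr rfl
      intro k hk
      have hk' : k ≤ m + 1 := Nat.lt_succ_iff.mp (Finset.mem_range.mp hk)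
      rw [Finset.mul_sum]
      rw [← Finset.sum_filter]
      have hfilt : (Finset.range (m+1)).filter (fun j => j < k) = Finset.range k := by
        ext j
        simp only [Finset.mem_filter, Finset.mem_range]
        omega
      rw [hfilt]
      apply Finset.sum_congr rfl
      intro j _
      ring
    rw [swap, hev t, hev x, ← Finset.sum_sub_distrib, Finset.sum_mul]
    apply Finset.sum_congr rfl
    intro k _
    rw [mul_assoc, blockk k, mul_sub]
  -- the approximating polynomial
  set b : ℕ → ℂ := fun j => (2 * (Real.pi:ℂ) * I)⁻¹ * ∮ t in C(0, R), F t * cj j t with hb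
  refine ⟨∑ j ∈ Finset.range (m+1), C (b j) * X ^ j, ?_, ?_⟩
  · apply Polynomial.natDegree_sum_le_of_forall_le
    intro j hj
    apply le_trans (natDegree_C_mul_le _ _)
    rw [natDegree_X_pow]
    exact Nat.lt_succ_iff.mp (Finset.mem_range.mp hj)
  intro x hx
  have hπI : (2 * (Real.pi:ℂ) * I) ≠ 0 := by
    simp [Real.pi_ne_zero, I_ne_zero, Complex.ofReal_ne_zero]
  have htx0 : ∀ t : ℂ, Complex.abs t = R → t - x ≠ 0 := by
    intro t ht h0
    have heq : t = x := by linear_combination h0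
    rw [heq] at ht
    rw [ht] at hx
    linarith
  have habs_tx : ∀ t : ℂ, Complex.abs t = R → R - 1 ≤ Complex.abs (t - x) := by
    intro t ht
    have h := Complex.abs.add_le (t - x) x
    rw [sub_add_cancel] at h
    rw [ht] at h
    linarith
  -- Cauchy formula
  have hxball : x ∈ ball (0:ℂ) R := by
    rw [mem_ball_zero_iff]
    exact lt_of_le_of_lt hx hR
  have hcauchy := (hg.differentiableOn).circleIntegral_sub_inv_smul (c := 0) (R := R) hxball
  have hgx : g x = (2 * (Real.pi:ℂ) * I)⁻¹ * ∮ t in C(0, R), (t - x)⁻¹ * g t := by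
    simp only [smul_eq_mul] at hcauchy
    rw [hcauchy, inv_mul_cancel_left₀ hπI]
  have hpeval : (∑ j ∈ Finset.range (m+1), C (b j) * X ^ j).eval x
      = (2 * (Real.pi:ℂ) * I)⁻¹ *
        ∮ t in C(0, R), F t * (∑ j ∈ Finset.range (m+1), cj j t * x ^ j) := by
    rw [eval_finset_sum]
    simp only [eval_mul, eval_C, eval_pow, eval_X]
    have h1 : ∀ j ∈ Finset.range (m+1), b j * x ^ j
        = (2 * (Real.pi:ℂ) * I)⁻¹ * ∮ t in C(0, R), x ^ j • (F t * cj j t) := by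
      intro j _
      rw [circleIntegral.integral_smul]
      rw [hb]
      simp only [smul_eq_mul]
      ring
    rw [Finset.sum_congr rfl h1, ← Finset.mul_sum]
    congr 1
    rw [← circ_sum (Finset.range (m+1)) (fun j t => x ^ j • (F t * cj j t))]
    · apply circ_congr (le_of_lt hR0)
      intro t _
      simp only [smul_eq_mul]
      rw [Finset.mul_sum]
      apply Finset.sum_congr rfl
      intro j _
      ring
    · intro j _
      apply ContinuousOn.circleIntegrable (le_of_lt hR0)
      exact (hFcont.mul (hcjcont j).continuousOn).const_smul (x ^ j)
  have hdiff : g x - (∑ j ∈ Finset.range (m+1), C (b j) * X ^ j).eval x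
      = (2 * (Real.pi:ℂ) * I)⁻¹ *
        ∮ t in C(0, R), ω.eval x * ((ω.eval t)⁻¹ * (t - x)⁻¹ * g t) := by
    rw [hgx, hpeval, ← mul_sub]
    congr 1
    rw [← circleIntegral.integral_sub]
    · apply circ_congr (le_of_lt hR0)
      intro t hts
      have ht := (hsph t).mp hts
      have hω0t := hω0 t ht
      have htx := htx0 t ht
      have hψ := key t x
      have hS : (∑ j ∈ Finset.range (m + 1), cj j t * x ^ j)
          = (eval t ω - eval x ω) / (t - x) := (eq_div_iff htx).mpr hψ
      simp only [hF]
      rw [hS]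
      field_simp
      try ring
    · apply ContinuousOn.circleIntegrable (le_of_lt hR0)
      apply ContinuousOn.mul _ hg.continuous.continuousOn
      apply ContinuousOn.inv₀ ((continuousOn_id.sub continuousOn_const))
      intro t hts
      exact htx0 t ((hsph t).mp hts)
    · apply ContinuousOn.circleIntegrable (le_of_lt hR0)
      apply hFcont.mul
      apply Continuous.continuousOn
      apply continuous_finset_sum
      intro j _
      exact (hcjcont j).mul continuous_const
  -- final bound
  rw [hdiff, map_mul]
  have habsinv : Complex.abs ((2 * (Real.pi:ℂ) * I)⁻¹) = (2 * Real.pi)⁻¹ := by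
    rw [map_inv₀, map_mul, map_mul, Complex.abs_I, Complex.abs_two, Complex.abs_ofReal,
      abs_of_pos Real.pi_pos, mul_one]
  rw [habsinv]
  have hMg0 : 0 ≤ Mg := by
    have : Complex.abs ((R:ℝ) : ℂ) = R := by
      rw [Complex.abs_ofReal, abs_of_pos hR0]
    exact le_trans (Complex.abs.nonneg _) (hMg _ this)
  have hbound : ‖∮ t in C(0, R), ω.eval x * ((ω.eval t)⁻¹ * (t - x)⁻¹ * g t)‖
      ≤ 2 * Real.pi * R * (Complex.abs (ω.eval x) * (ε⁻¹ * ((R-1)⁻¹ * Mg))) := by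
    apply circleIntegral.norm_integral_le_of_norm_le_const (le_of_lt hR0)
    intro t hts
    have ht := (hsph t).mp hts
    rw [Complex.norm_eq_abs, map_mul, map_mul, map_mul, map_inv₀, map_inv₀]
    apply mul_le_mul_of_nonneg_left _ (Complex.abs.nonneg _)
    have h1 : (Complex.abs (ω.eval t))⁻¹ ≤ ε⁻¹ := inv_anti₀ hε (hωt t ht)
    have h2 : (Complex.abs (t - x))⁻¹ ≤ (R-1)⁻¹ :=
      inv_anti₀ (by linarith) (habs_tx t ht)
    have h3 := hMg t ht
    have h4 := mul_le_mul h2 h3 (Complex.abs.nonneg _)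
      (le_of_lt (inv_pos.mpr (by linarith : (0:ℝ) < R - 1)))
    rw [mul_assoc]
    exact mul_le_mul h1 h4 (by positivity)
      (le_of_lt (inv_pos.mpr hε))
  calc (2*Real.pi)⁻¹ * Complex.abs (∮ t in C(0, R), ω.eval x * ((ω.eval t)⁻¹ * (t - x)⁻¹ * g t))
      ≤ (2*Real.pi)⁻¹ * (2 * Real.pi * R * (Complex.abs (ω.eval x) * (ε⁻¹ * ((R-1)⁻¹ * Mg)))) := by
        apply mul_le_mul_of_nonneg_left _ (by positivity)
        exact hbound
    _ = R / (R - 1) * Mg * (Complex.abs (ω.eval x) / ε) := by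
        have hπ : Real.pi ≠ 0 := Real.pi_ne_zero
        have : R - 1 ≠ 0 := by linarith
        field_simp


lemma chooseConst (qbar q γ : ℝ) (h0 : 0 < qbar) (h1 : qbar < q) (h2 : q < 1) (hγ : 0 ≤ γ) :
    ∃ (R : ℝ) (n m₀ : ℕ), 2 ≤ R ∧ 1 ≤ n ∧ 1 ≤ m₀ ∧ ∀ m, m₀ ≤ m → n ≤ m ∧
      R/(R-1) * Real.exp (γ*R) * (2*qbar*R+3)^m * (2/((2*R-1)^n - 1))^((m+1)/n) ≤ q^m := by
  set d := q - qbar with hd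
  have hd0 : 0 < d := by simp [hd]; linarith
  have hd1 : d < 1 := by simp [hd]; linarith
  set R := 6/d with hR
  have hR6 : 6 ≤ R := by
    rw [hR, le_div_iff₀ hd0]
    linarith
  have hR2 : 2 ≤ R := by linarith
  have hR1 : (1:ℝ) < R := by linarith
  have hRd : R * d = 6 := by
    rw [hR]
    field_simp
  set q' := (q + qbar)/2 with hq'
  have hq'0 : 0 < q' := by rw [hq']; linarith
  have hq'q : q' < q := by rw [hq']; linarith
  have hqbq' : qbar < q' := by rw [hq']; linarith
  have hq'1 : q' < 1 := by rw [hq']; linarith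
  set A := 2*qbar*R + 3 with hA
  have hA3 : 3 ≤ A := by
    rw [hA]
    nlinarith
  have hA0 : 0 < A := by linarith
  have hcond : A + 2 ≤ q' * (2*R - 1) := by
    have hq'mb : q' - qbar = d/2 := by rw [hq', hd]; ring
    nlinarith [hRd, hq'1, hq'0]
  have hρ : 1 < q' * (2*R-1) / A := by
    rw [lt_div_iff₀ hA0]
    linarith
  obtain ⟨n, hn⟩ := pow_unbounded_of_one_lt (8:ℝ) hρ
  have hn1 : 1 ≤ n := by
    rcases Nat.eq_zero_or_pos n with h | h
    · rw [h] at hn; norm_num at hn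
    · exact h
  have h2R0 : (0:ℝ) < 2*R - 1 := by linarith
  have hTR : (11:ℝ) ≤ 2*R - 1 := by linarith
  have hTRn : (2:ℝ) ≤ (2*R-1)^n := by
    calc (2:ℝ) ≤ 2*R - 1 := by linarith
      _ ≤ (2*R-1)^n := le_self_pow₀ (by linarith) (by omega)
  have hB0 : (0:ℝ) < (2*R-1)^n - 1 := by linarith
  have hB2 : 2/((2*R-1)^n - 1) ≤ 4/(2*R-1)^n := by
    rw [div_le_div_iff₀ hB0 (by positivity)]
    nlinarith
  have hpow : 8 * A^n < q'^n * (2*R-1)^n := by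
    have h := hn
    rw [div_pow, mul_pow] at h
    rw [lt_div_iff₀ (pow_pos hA0 n)] at h
    linarith
  have hblock : A^n * (2/((2*R-1)^n - 1)) ≤ q'^n / 2 := by
    calc A^n * (2/((2*R-1)^n - 1)) ≤ A^n * (4/(2*R-1)^n) :=
          mul_le_mul_of_nonneg_left hB2 (pow_nonneg (le_of_lt hA0) n)
      _ ≤ q'^n / 2 := by
          rw [show A^n * (4/(2*R-1)^n) = (4*A^n)/(2*R-1)^n by ring]
          rw [div_le_div_iff₀ (pow_pos h2R0 n) two_pos]
          nlinarith
  set C := R/(R-1) * Real.exp (γ*R) * A^n / q'^(n-1) with hC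
  have hC0 : 0 < C := by
    rw [hC]
    have h5 : (0:ℝ) < R - 1 := by linarith
    positivity
  have hqq' : 1 < q/q' := by
    rw [lt_div_iff₀ hq'0]
    linarith
  obtain ⟨m₁, hm₁⟩ := pow_unbounded_of_one_lt C hqq'
  refine ⟨R, n, max (max m₁ n) 1, hR2, hn1, le_max_right _ _, ?_⟩
  intro m hm
  have hnm : n ≤ m := le_trans (le_trans (le_max_right m₁ n) (le_max_left _ _)) hm
  refine ⟨hnm, ?_⟩
  set k := (m+1)/n with hk
  set r := (m+1) % n with hr
  have hdm : n * k + r = m + 1 := Nat.div_add_mod (m+1) n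
  have hrn : r < n := Nat.mod_lt _ (by omega)
  have h2B0 : (0:ℝ) < 2/((2*R-1)^n - 1) := by positivity
  have hAm : A^m ≤ A^(n*k+n) := pow_le_pow_right₀ (by linarith) (by omega)
  have step1 : A^m * (2/((2*R-1)^n - 1))^k ≤ A^n * (A^n * (2/((2*R-1)^n - 1)))^k := by
    have he : A^(n*k+n) * (2/((2*R-1)^n - 1))^k = A^n * (A^n * (2/((2*R-1)^n - 1)))^k := by
      rw [mul_pow, ← pow_mul]
      ring
    rw [← he]
    exact mul_le_mul_of_nonneg_right hAm (pow_nonneg (le_of_lt h2B0) k)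
  have step2 : (A^n * (2/((2*R-1)^n - 1)))^k ≤ q'^(n*k) := by
    calc (A^n * (2/((2*R-1)^n - 1)))^k ≤ (q'^n/2)^k :=
          pow_le_pow_left₀ (by positivity) hblock k
      _ = q'^(n*k) / 2^k := by rw [div_pow, pow_mul]
      _ ≤ q'^(n*k) := div_le_self (by positivity) (one_le_pow₀ (by norm_num))
  have step3 : q'^(n*k) ≤ q'^(m+1-n) :=
    pow_le_pow_of_le_one (le_of_lt hq'0) (le_of_lt hq'1) (by omega)
  have step4 : q'^(m+1-n) = q'^m / q'^(n-1) := by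
    rw [eq_div_iff (by positivity)]
    rw [← pow_add]
    congr 1
    omega
  have hmain : A^m * (2/((2*R-1)^n - 1))^k ≤ A^n * (q'^m / q'^(n-1)) := by
    calc A^m * (2/((2*R-1)^n - 1))^k ≤ A^n * (A^n * (2/((2*R-1)^n - 1)))^k := step1
      _ ≤ A^n * q'^(n*k) := mul_le_mul_of_nonneg_left step2 (by positivity)
      _ ≤ A^n * q'^(m+1-n) := mul_le_mul_of_nonneg_left step3 (by positivity)
      _ = A^n * (q'^m / q'^(n-1)) := by rw [step4]
  have hCm : C ≤ (q/q')^m :=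
    le_trans (le_of_lt hm₁)
      (pow_le_pow_right₀ (le_of_lt hqq') (le_trans (le_trans (le_max_left m₁ n) (le_max_left _ _)) hm))
  calc R/(R-1) * Real.exp (γ*R) * A^m * (2/((2*R-1)^n - 1))^k
      = (R/(R-1) * Real.exp (γ*R)) * (A^m * (2/((2*R-1)^n - 1))^k) := by ring
    _ ≤ (R/(R-1) * Real.exp (γ*R)) * (A^n * (q'^m / q'^(n-1))) := by
        apply mul_le_mul_of_nonneg_left hmain
        have h5 : (0:ℝ) < R - 1 := by linarith
        positivity
    _ = C * q'^m := by rw [hC]; ring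
    _ ≤ (q/q')^m * q'^m := mul_le_mul_of_nonneg_right hCm (by positivity)
    _ = q^m := by
        rw [← mul_pow, div_mul_cancel₀ _ (ne_of_gt hq'0)]

/-! ### affine map helpers -/

lemma phiAB_mem {a b t : ℝ} (hab : a ≤ b) (ht : t ∈ Icc (-1:ℝ) 1) : phiAB a b t ∈ Icc a b := by
  unfold phiAB
  obtain ⟨h1, h2⟩ := ht
  constructor <;> nlinarith

lemma phiInvAB_mem {a b x : ℝ} (hab : a < b) (hx : x ∈ Icc a b) :
    phiInvAB a b x ∈ Icc (-1:ℝ) 1 := by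
  unfold phiInvAB
  obtain ⟨h1, h2⟩ := hx
  have hba : 0 < b - a := by linarith
  constructor
  · rw [le_div_iff₀ hba]; linarith
  · rw [div_le_iff₀ hba]; linarith

lemma phiAB_phiInvAB {a b x : ℝ} (hab : a < b) : phiAB a b (phiInvAB a b x) = x := by
  unfold phiAB phiInvAB
  have hba : b - a ≠ 0 := by intro h; linarith
  field_simp
  ring

lemma interpOn_eq {m : ℕ} (ξ : Fin (m + 1) → ℝ) (a b : ℝ) (f : ℝ → ℂ) (x : ℝ) :
    interpOn ξ a b f x = interpC ξ (fun t => f (phiAB a b t)) (phiInvAB a b x) := rfl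

lemma abs_exp_I_mul (κ c x : ℝ) :
    Complex.abs (Complex.exp (Complex.I * (κ:ℂ) * (c:ℂ) * (x:ℂ))) = 1 := by
  rw [show Complex.I * (κ:ℂ) * (c:ℂ) * (x:ℂ) = ((κ*c*x : ℝ) : ℂ) * Complex.I by
    push_cast; ring]
  exact Complex.abs_exp_ofReal_mul_I _

/-! ### the key single-step estimate -/

lemma keyStep {m : ℕ} (ξ : Fin (m+1) → ℝ) (hξ : ∀ ν, ξ ν ∈ Set.Icc (-1:ℝ) 1)
    (hinj : Function.Injective ξ)
    (a b a' b' : ℝ) (hab : a < b) (hab' : a' < b')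
    (hsub : Set.Icc a b ⊆ Set.Icc a' b')
    (qbar : ℝ) (hσq : (b - a) / (b' - a') ≤ qbar)
    (κ c' c γ : ℝ) (hγ0 : 0 ≤ γ) (hγ : |κ * ((b' - a')/2) * (c' - c)| ≤ γ)
    (R : ℝ) (hR : 2 ≤ R) (n : ℕ) (hn : 1 ≤ n)
    (π : Polynomial ℂ) (hdeg : π.natDegree ≤ m) :
    ∀ x ∈ Set.Icc a b,
      Complex.abs (Complex.exp (Complex.I * (κ:ℂ) * (c':ℂ) * (x:ℂ)) * π.eval (x:ℂ)
        - wInterp ξ a b κ c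
            (fun y => Complex.exp (Complex.I * (κ:ℂ) * (c':ℂ) * (y:ℂ)) * π.eval (y:ℂ)) x)
      ≤ (1 + lebesgueConst ξ) *
          (R/(R-1) * Real.exp (γ*R) * (2*qbar*R+3)^m * (2/((2*R-1)^n - 1))^((m+1)/n)) *
          supNormOn (fun y : ℝ => π.eval (y:ℂ)) (Set.Icc a' b') := by
  have hba : (0:ℝ) < b - a := by linarith
  have hba' : (0:ℝ) < b' - a' := by linarith
  obtain ⟨ha'a, hbb'⟩ := (Set.Icc_subset_Icc_iff (le_of_lt hab)).mp hsub
  set hh : ℝ := (b-a)/2 with hhh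
  set mid : ℝ := (b+a)/2 with hmid
  set hh' : ℝ := (b'-a')/2 with hhh'
  set mid' : ℝ := (b'+a')/2 with hmid'
  have hh0 : 0 < hh := by rw [hhh]; linarith
  have hh'0 : 0 < hh' := by rw [hhh']; linarith
  set δ : ℝ := c' - c with hδ
  set σ : ℝ := hh / hh' with hσ
  have hσeq : σ = (b-a)/(b'-a') := by rw [hσ, hhh, hhh']; field_simp
  have hσ0 : 0 < σ := div_pos hh0 hh'0
  have hσqb : σ ≤ qbar := by rw [hσeq]; exact hσq
  have hhle : hh ≤ hh' := by rw [hhh, hhh']; linarith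
  have hσ1 : σ ≤ 1 := by rw [hσ]; exact div_le_one_of_le₀ hhle (le_of_lt hh'0)
  set τ : ℝ := (mid - mid') / hh' with hτdef
  have hτ : |τ| ≤ 1 := by
    rw [hτdef, abs_div, abs_of_pos hh'0, div_le_one hh'0, abs_le]
    constructor <;> [skip; skip] <;> rw [hmid, hmid', hhh'] <;> linarith
  -- the polynomial Q on the big interval
  set Q : Polynomial ℂ := π.comp (Polynomial.C (mid':ℂ) + Polynomial.C (hh':ℂ) * Polynomial.X)
    with hQdef
  have hQdeg : Q.natDegree ≤ m := by
    rw [hQdef]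
    refine le_trans Polynomial.natDegree_comp_le ?_
    have h1 : (Polynomial.C (mid':ℂ) + Polynomial.C (hh':ℂ) * Polynomial.X).natDegree ≤ 1 := by
      refine le_trans (Polynomial.natDegree_add_le _ _) ?_
      simp only [Polynomial.natDegree_C, max_le_iff]
      exact ⟨Nat.zero_le 1, le_trans (Polynomial.natDegree_C_mul_le _ _)
        (le_of_eq Polynomial.natDegree_X)⟩
    calc π.natDegree * (Polynomial.C (mid':ℂ) + Polynomial.C (hh':ℂ) * Polynomial.X).natDegree
        ≤ m * 1 := Nat.mul_le_mul hdeg h1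
      _ = m := by ring
  have hQeval : ∀ z : ℂ, Q.eval z = π.eval ((mid':ℂ) + (hh':ℂ) * z) := by
    intro z
    rw [hQdef, Polynomial.eval_comp]
    simp
  set M : ℝ := supNormOn (fun y : ℝ => π.eval (y:ℂ)) (Set.Icc a' b') with hM
  have hπcont : Continuous (fun y : ℝ => π.eval (y:ℂ)) :=
    (Polynomial.continuous π).comp Complex.continuous_ofReal
  have hM0 : 0 ≤ M := supNormOn_nonneg _ _
  have hQbound : ∀ s : ℝ, s ∈ Icc (-1:ℝ) 1 → Complex.abs (Q.eval (s:ℂ)) ≤ M := by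
    intro s hs
    rw [hQeval]
    have hcast : (mid':ℂ) + (hh':ℂ) * (s:ℂ) = ((mid' + hh' * s : ℝ) : ℂ) := by push_cast; ring
    rw [hcast]
    apply le_supNormOn (bddAbove_absImage hπcont.continuousOn)
    obtain ⟨h1, h2⟩ := hs
    constructor <;> [rw [hmid', hhh']; rw [hmid', hhh']] <;> nlinarith
  have hbern := bernstein_growth hQdeg hQbound
  -- the entire function 𝔾
  set G : ℂ → ℂ := fun z =>
    Complex.exp (Complex.I * ((κ*δ : ℝ):ℂ) * ((mid:ℂ) + (hh:ℂ)*z)) * π.eval ((mid:ℂ) + (hh:ℂ)*z)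
    with hGdef
  have hlin : Differentiable ℂ (fun z : ℂ => (mid:ℂ) + (hh:ℂ)*z) :=
    (differentiable_const _).add ((differentiable_const _).mul differentiable_id)
  have hGdiff : Differentiable ℂ G := by
    rw [hGdef]
    exact ((hlin.const_mul _).cexp).mul ((π.differentiable).comp hlin)
  -- bound for G on the sphere of radius R
  have hκδh : |κ * δ * hh| ≤ γ := by
    have he : κ * δ * hh = (κ * hh' * δ) * σ := by
      rw [hσ]
      field_simp
    rw [he, abs_mul, abs_of_pos hσ0]
    calc |κ * hh' * δ| * σ ≤ γ * 1 := by
          apply mul_le_mul _ hσ1 (le_of_lt hσ0) hγ0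
          rw [hhh']
          exact hγ
      _ = γ := by ring
  have hR0 : (0:ℝ) < R := by linarith
  have hR1 : (1:ℝ) < R := by linarith
  have hMgG : ∀ t : ℂ, Complex.abs t = R →
      Complex.abs (G t) ≤ Real.exp (γ*R) * (M * (2*qbar*R+3)^m) := by
    intro t ht
    rw [hGdef]
    simp only [map_mul]
    have hexp : Complex.abs (Complex.exp (Complex.I * ((κ*δ : ℝ):ℂ) * ((mid:ℂ) + (hh:ℂ)*t)))
        ≤ Real.exp (γ*R) := by
      rw [Complex.abs_exp]
      apply Real.exp_le_exp.mpr
      have hre : (Complex.I * ((κ*δ : ℝ):ℂ) * ((mid:ℂ) + (hh:ℂ)*t)).re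
          = -(κ*δ) * (hh * t.im) := by
        simp [Complex.mul_re, Complex.mul_im, Complex.I_re, Complex.I_im,
          Complex.ofReal_re, Complex.ofReal_im, Complex.add_re, Complex.add_im]
        try ring
      rw [hre]
      have him : |t.im| ≤ R := by rw [← ht]; exact Complex.abs_im_le_abs t
      have h1 : -(κ*δ) * (hh * t.im) ≤ |(-(κ*δ)) * (hh * t.im)| := le_abs_self _
      have h2 : |(-(κ*δ)) * (hh * t.im)| = |(κ*δ*hh) * t.im| := by
        rw [show (-(κ*δ)) * (hh * t.im) = -((κ*δ*hh) * t.im) by ring, abs_neg]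
      rw [h2, abs_mul] at h1
      refine le_trans h1 ?_
      exact mul_le_mul hκδh him (abs_nonneg _) hγ0
    have hpoly : Complex.abs (π.eval ((mid:ℂ) + (hh:ℂ)*t)) ≤ M * (2*qbar*R+3)^m := by
      have harg : (mid:ℂ) + (hh:ℂ)*t = (mid':ℂ) + (hh':ℂ) * ((σ:ℝ)*t + (τ:ℝ)) := by
        have hh'ne : ((hh':ℝ):ℂ) ≠ 0 := by
          exact_mod_cast ne_of_gt hh'0
        have e1 : (hh':ℂ) * (σ:ℝ) = (hh:ℂ) := by
          rw [hσ]
          push_cast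
          field_simp
        have e2 : (hh':ℂ) * (τ:ℝ) = (mid:ℂ) - (mid':ℂ) := by
          rw [hτdef]
          push_cast
          field_simp
        calc (mid:ℂ) + (hh:ℂ)*t = (mid':ℂ) + ((hh':ℂ) * (σ:ℝ)) * t + ((mid:ℂ) - (mid':ℂ)) := by
              rw [e1]; ring
          _ = (mid':ℂ) + (hh':ℂ) * ((σ:ℝ)*t + (τ:ℝ)) := by rw [← e2]; ring
      rw [harg, ← hQeval]
      refine le_trans (hbern _) ?_
      have habss : Complex.abs ((σ:ℝ)*t + (τ:ℝ)) ≤ σ * R + 1 := by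
        calc Complex.abs ((σ:ℝ)*t + (τ:ℝ))
            ≤ Complex.abs ((σ:ℝ)*t) + Complex.abs ((τ:ℝ)) := Complex.abs.add_le _ _
          _ = σ * R + |τ| := by
              rw [map_mul, Complex.abs_ofReal, Complex.abs_ofReal, abs_of_pos hσ0, ht]
          _ ≤ σ * R + 1 := by linarith
      apply mul_le_mul_of_nonneg_left _ hM0
      apply pow_le_pow_left₀ (by positivity)
      have : σ * R ≤ qbar * R := mul_le_mul_of_nonneg_right hσqb (le_of_lt hR0)
      linarith
    exact mul_le_mul hexp hpoly (Complex.abs.nonneg _) (le_of_lt (Real.exp_pos _))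
  -- the nodal polynomial ω
  set k : ℕ := (m+1)/n with hk
  set r : ℕ := (m+1) % n with hrr
  have hdm : n * k + r = m + 1 := Nat.div_add_mod (m+1) n
  set ω : Polynomial ℂ := (Polynomial.Chebyshev.T ℂ n)^k * Polynomial.X^r with hωdef
  have hωdeg : ω.natDegree ≤ m + 1 := by
    rw [hωdef]
    refine le_trans Polynomial.natDegree_mul_le ?_
    rw [Polynomial.natDegree_pow, Polynomial.natDegree_X_pow]
    have := natDegree_T_le n
    calc k * (Polynomial.Chebyshev.T ℂ n).natDegree + r ≤ k * n + r :=
          Nat.add_le_add_right (Nat.mul_le_mul_left k this) r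
      _ = m + 1 := by rw [Nat.mul_comm]; exact hdm
  have h2R1 : (1:ℝ) ≤ 2*R - 1 := by linarith
  have hTRn2 : (2:ℝ) ≤ (2*R-1)^n := by
    calc (2:ℝ) ≤ 2*R-1 := by linarith
      _ ≤ (2*R-1)^n := le_self_pow₀ (by linarith) (by omega)
  have hB0 : (0:ℝ) < (2*R-1)^n - 1 := by linarith
  set ε : ℝ := (((2*R-1)^n - 1)/2)^k with hεdef
  have hε0 : 0 < ε := by rw [hεdef]; positivity
  have hωx : ∀ x : ℝ, x ∈ Icc (-1:ℝ) 1 → Complex.abs (ω.eval (x:ℂ)) ≤ 1 := by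
    intro x hx
    rw [hωdef]
    simp only [Polynomial.eval_mul, Polynomial.eval_pow, Polynomial.eval_X, map_mul, map_pow]
    have h1 : Complex.abs ((Polynomial.Chebyshev.T ℂ n).eval (x:ℂ)) ≤ 1 := T_abs_le_one n hx
    have h2 : Complex.abs ((x:ℝ):ℂ) ≤ 1 := by
      rw [Complex.abs_ofReal]
      rw [abs_le]
      exact ⟨hx.1, hx.2⟩
    calc Complex.abs ((Polynomial.Chebyshev.T ℂ n).eval (x:ℂ)) ^ k * Complex.abs ((x:ℝ):ℂ) ^ r
        ≤ 1 ^ k * 1 ^ r := by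
          apply mul_le_mul (pow_le_pow_left₀ (Complex.abs.nonneg _) h1 k)
            (pow_le_pow_left₀ (Complex.abs.nonneg _) h2 r)
            (by positivity) (by positivity)
      _ = 1 := by norm_num
  have hωsph : ∀ t : ℂ, Complex.abs t = R → ε ≤ Complex.abs (ω.eval t) := by
    intro t ht
    rw [hωdef]
    simp only [Polynomial.eval_mul, Polynomial.eval_pow, Polynomial.eval_X, map_mul, map_pow]
    have h1 : ((2*R-1)^n - 1)/2 ≤ Complex.abs ((Polynomial.Chebyshev.T ℂ n).eval t) :=
      T_abs_ge n R (by linarith) t ht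
    have h2 : (1:ℝ) ≤ Complex.abs t ^ r := by
      rw [ht]
      exact one_le_pow₀ (by linarith)
    calc ε = (((2*R-1)^n - 1)/2)^k * 1 := by rw [hεdef]; ring
      _ ≤ Complex.abs ((Polynomial.Chebyshev.T ℂ n).eval t) ^ k * Complex.abs t ^ r := by
          apply mul_le_mul (pow_le_pow_left₀ (by positivity) h1 k) h2 (by norm_num)
            (by positivity)
  -- the approximating polynomial
  obtain ⟨p, hpdeg, hperr⟩ := approx_poly G hGdiff m ω hωdeg R
    (Real.exp (γ*R) * (M * (2*qbar*R+3)^m)) ε hR1 hε0 hMgG hωsph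
  have h5 : (0:ℝ) < R - 1 := by linarith
  have hqbar0 : 0 < qbar := lt_of_lt_of_le hσ0 hσqb
  have hfac0 : 0 ≤ R/(R-1) * (Real.exp (γ*R) * (M * (2*qbar*R+3)^m)) :=
    mul_nonneg (by positivity) (mul_nonneg (Real.exp_pos _).le
      (mul_nonneg hM0 (pow_nonneg (by nlinarith) m)))
  set eB : ℝ := R/(R-1) * (Real.exp (γ*R) * (M * (2*qbar*R+3)^m)) * (1/ε) with heB
  have heB0 : 0 ≤ eB := by
    rw [heB]
    exact mul_nonneg hfac0 (one_div_nonneg.mpr hε0.le)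
  have hDbound : ∀ t : ℝ, t ∈ Icc (-1:ℝ) 1 →
      Complex.abs (G (t:ℂ) - p.eval (t:ℂ)) ≤ eB := by
    intro t htt
    have h1 : Complex.abs ((t:ℝ):ℂ) ≤ 1 := by
      rw [Complex.abs_ofReal, abs_le]; exact ⟨htt.1, htt.2⟩
    refine le_trans (hperr (t:ℂ) h1) ?_
    rw [heB]
    apply mul_le_mul_of_nonneg_left _ hfac0
    gcongr
    exact hωx t htt
  -- continuity of the real restrictions
  have hlinR : Continuous (fun t : ℝ => (mid:ℂ) + (hh:ℂ)*(t:ℂ)) :=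
    continuous_const.add (continuous_const.mul Complex.continuous_ofReal)
  have hGcont : Continuous (fun t : ℝ => G (t:ℂ)) := by
    rw [hGdef]
    exact (Complex.continuous_exp.comp (continuous_const.mul hlinR)).mul
      ((Polynomial.continuous π).comp hlinR)
  set D : ℝ → ℂ := fun t : ℝ => G (t:ℂ) - p.eval (t:ℂ) with hDdef
  have hDcont : Continuous D := by
    rw [hDdef]
    exact hGcont.sub ((Polynomial.continuous p).comp Complex.continuous_ofReal)
  have hID : supNormOn (interpC ξ D) (Icc (-1) 1) ≤ lebesgueConst ξ * eB := by
    refine le_trans (interpC_le_lebesgue ξ hξ hDcont.continuousOn) ?_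
    exact mul_le_mul_of_nonneg_left (supNormOn_le heB0 (fun s hs => hDbound s hs))
      (lebesgueConst_nonneg ξ hξ)
  -- pointwise estimate
  intro x hx
  set t : ℝ := phiInvAB a b x with htdef
  have htmem : t ∈ Icc (-1:ℝ) 1 := phiInvAB_mem hab hx
  have hphimid : ∀ s : ℝ, phiAB a b s = mid + hh * s := by
    intro s
    rw [hmid, hhh]
    rfl
  have hphit : mid + hh * t = x := by
    rw [← hphimid t, htdef]
    exact phiAB_phiInvAB hab
  have hWeq : (fun s : ℝ =>
        Complex.exp (-(Complex.I * (κ:ℂ) * (c:ℂ) * ((phiAB a b s : ℝ):ℂ))) *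
          (Complex.exp (Complex.I * (κ:ℂ) * (c':ℂ) * ((phiAB a b s : ℝ):ℂ)) *
            π.eval ((phiAB a b s : ℝ):ℂ)))
      = fun s : ℝ => G (s:ℂ) := by
    funext s
    rw [hGdef]
    simp only
    rw [hphimid s]
    have hcast : ((mid + hh * s : ℝ) : ℂ) = (mid:ℂ) + (hh:ℂ)*(s:ℂ) := by push_cast; ring
    rw [hcast, ← mul_assoc, ← Complex.exp_add]
    congr 2
    rw [hδ]
    push_cast
    ring
  have hrw : Complex.exp (Complex.I * (κ:ℂ) * (c':ℂ) * (x:ℂ)) * π.eval (x:ℂ)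
        - wInterp ξ a b κ c
            (fun y => Complex.exp (Complex.I * (κ:ℂ) * (c':ℂ) * (y:ℂ)) * π.eval (y:ℂ)) x
      = Complex.exp (Complex.I * (κ:ℂ) * (c:ℂ) * (x:ℂ)) *
          (G (t:ℂ) - interpC ξ (fun s : ℝ => G (s:ℂ)) t) := by
    unfold wInterp
    rw [interpOn_eq, hWeq, ← htdef, mul_sub]
    congr 1
    rw [hGdef]
    simp only
    have hcast : (mid:ℂ) + (hh:ℂ)*(t:ℂ) = (x:ℂ) := by
      rw [show (x:ℂ) = ((mid + hh * t : ℝ):ℂ) by rw [hphit]]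
      push_cast
      ring
    rw [hcast, ← mul_assoc, ← Complex.exp_add]
    congr 2
    rw [hδ]
    push_cast
    ring
  have hεinv : 1/ε = (2/((2*R-1)^n - 1))^k := by
    rw [hεdef, one_div, ← inv_pow, inv_div]
  have hsplit : Complex.abs (G (t:ℂ) - interpC ξ (fun s : ℝ => G (s:ℂ)) t)
      ≤ eB + lebesgueConst ξ * eB := by
    have hinterp_p : interpC ξ (fun s : ℝ => p.eval (s:ℂ)) t = p.eval (t:ℂ) :=
      interpC_poly hinj hpdeg t
    have hsub2 : interpC ξ (fun s : ℝ => G (s:ℂ)) t - p.eval (t:ℂ) = interpC ξ D t := by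
      rw [hDdef, interpC_sub ξ (fun s : ℝ => G (s:ℂ)) (fun s : ℝ => p.eval (s:ℂ)) t, hinterp_p]
    calc Complex.abs (G (t:ℂ) - interpC ξ (fun s : ℝ => G (s:ℂ)) t)
        ≤ Complex.abs (G (t:ℂ) - p.eval (t:ℂ))
          + Complex.abs (p.eval (t:ℂ) - interpC ξ (fun s : ℝ => G (s:ℂ)) t) :=
          Complex.abs.sub_le _ _ _
      _ ≤ eB + lebesgueConst ξ * eB := by
          apply add_le_add (hDbound t htmem)
          have hneg : p.eval (t:ℂ) - interpC ξ (fun s : ℝ => G (s:ℂ)) t = -(interpC ξ D t) := by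
            rw [← hsub2]; ring
          rw [hneg, map_neg_eq_map]
          exact le_trans
            (le_supNormOn (bddAbove_absImage (continuous_interpC ξ D).continuousOn) htmem) hID
  calc Complex.abs (Complex.exp (Complex.I * (κ:ℂ) * (c':ℂ) * (x:ℂ)) * π.eval (x:ℂ)
        - wInterp ξ a b κ c
            (fun y => Complex.exp (Complex.I * (κ:ℂ) * (c':ℂ) * (y:ℂ)) * π.eval (y:ℂ)) x)
      = Complex.abs (G (t:ℂ) - interpC ξ (fun s : ℝ => G (s:ℂ)) t) := by
        rw [hrw, map_mul, abs_exp_I_mul, one_mul]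
    _ ≤ eB + lebesgueConst ξ * eB := hsplit
    _ = (1 + lebesgueConst ξ) *
          (R/(R-1) * Real.exp (γ*R) * (2*qbar*R+3)^m * (2/((2*R-1)^n - 1))^k) * M := by
        rw [heB, hεinv]
        ring

/-! ### structural lemmas for wInterp -/

lemma abs_exp_neg_I_mul (κ c x : ℝ) :
    Complex.abs (Complex.exp (-(Complex.I * (κ:ℂ) * (c:ℂ) * (x:ℂ)))) = 1 := by
  rw [show -(Complex.I * (κ:ℂ) * (c:ℂ) * (x:ℂ)) = ((-(κ*c*x) : ℝ) : ℂ) * Complex.I by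
    push_cast; ring]
  exact Complex.abs_exp_ofReal_mul_I _

lemma natDegree_interp_le {m : ℕ} (ξ : Fin (m+1) → ℝ) (hinj : Function.Injective ξ)
    (r : Fin (m+1) → ℂ) :
    (Lagrange.interpolate Finset.univ (fun μ => ((ξ μ : ℝ):ℂ)) r).natDegree ≤ m := by
  set P := Lagrange.interpolate Finset.univ (fun μ => ((ξ μ : ℝ):ℂ)) r with hP
  by_cases h0 : P = 0
  · rw [h0]; simp
  · have hd := Lagrange.degree_interpolate_lt r (injOn_castξ hinj)
    rw [← hP] at hd
    have : P.degree < ((m+1 : ℕ) : WithBot ℕ) := by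
      simpa using hd
    have h2 := (Polynomial.natDegree_lt_iff_degree_lt h0).mpr this
    omega

lemma wInterp_poly {m : ℕ} (ξ : Fin (m+1) → ℝ) (hinj : Function.Injective ξ)
    {a b : ℝ} (hab : a < b) (κ c : ℝ) (f : ℝ → ℂ) :
    ∃ p : Polynomial ℂ, p.natDegree ≤ m ∧
      ∀ x : ℝ, wInterp ξ a b κ c f x
        = Complex.exp (Complex.I * (κ:ℂ) * (c:ℂ) * (x:ℂ)) * p.eval (x:ℂ) := by
  have hba : b - a ≠ 0 := by intro h; linarith
  set P : Polynomial ℂ := Lagrange.interpolate Finset.univ (fun μ => ((ξ μ : ℝ):ℂ))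
    (fun ν => Complex.exp (-(Complex.I * (κ:ℂ) * (c:ℂ) * ((phiAB a b (ξ ν) : ℝ):ℂ)))
      * f (phiAB a b (ξ ν))) with hPdef
  set lin : Polynomial ℂ := Polynomial.C (((-(a+b)/(b-a)) : ℝ):ℂ)
    + Polynomial.C (((2/(b-a)) : ℝ):ℂ) * Polynomial.X with hlin
  have hlineval : ∀ x : ℝ, lin.eval (x:ℂ) = ((phiInvAB a b x : ℝ) : ℂ) := by
    intro x
    rw [hlin]
    simp only [Polynomial.eval_add, Polynomial.eval_mul, Polynomial.eval_C, Polynomial.eval_X]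
    unfold phiInvAB
    push_cast
    field_simp
    ring
  refine ⟨P.comp lin, ?_, ?_⟩
  · refine le_trans Polynomial.natDegree_comp_le ?_
    have h1 : lin.natDegree ≤ 1 := by
      rw [hlin]
      refine le_trans (Polynomial.natDegree_add_le _ _) ?_
      simp only [Polynomial.natDegree_C, max_le_iff]
      exact ⟨Nat.zero_le 1, le_trans (Polynomial.natDegree_C_mul_le _ _)
        (le_of_eq Polynomial.natDegree_X)⟩
    calc P.natDegree * lin.natDegree ≤ m * 1 :=
          Nat.mul_le_mul (natDegree_interp_le ξ hinj _) h1
      _ = m := by ring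
  · intro x
    unfold wInterp
    congr 1
    rw [interpOn_eq, interpC_eq_eval, Polynomial.eval_comp, hlineval]
lemma nestIcc (L : ℕ) (A B : ℕ → ℝ)
    (hnest : ∀ ℓ, 1 ≤ ℓ → ℓ ≤ L → Icc (A ℓ) (B ℓ) ⊆ Icc (A (ℓ-1)) (B (ℓ-1))) :
    ∀ ℓ, ℓ ≤ L → ∀ j, j ≤ ℓ → Icc (A ℓ) (B ℓ) ⊆ Icc (A j) (B j) := by
  intro ℓ
  induction ℓ with
  | zero =>
    intro _ j hj
    rw [Nat.le_zero] at hj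
    subst hj
    exact subset_rfl
  | succ i ih =>
    intro hL j hj
    rcases Nat.lt_or_ge j (i+1) with h | h
    · refine subset_trans ?_ (ih (by omega) j (by omega))
      have h2 := hnest (i+1) (by omega) hL
      simpa using h2
    · have : j = i + 1 := by omega
      subst this
      exact subset_rfl

lemma contExpPoly (κ c : ℝ) (p : Polynomial ℂ) :
    Continuous (fun x : ℝ =>
      Complex.exp (Complex.I * (κ:ℂ) * (c:ℂ) * (x:ℂ)) * p.eval (x:ℂ)) :=
  (Complex.continuous_exp.comp (continuous_const.mul Complex.continuous_ofReal)).mul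
    ((Polynomial.continuous p).comp Complex.continuous_ofReal)

lemma wInterp_norm {m : ℕ} (ξ : Fin (m+1) → ℝ) (hξ : ∀ ν, ξ ν ∈ Icc (-1:ℝ) 1)
    {a b : ℝ} (hab : a < b) (κ c : ℝ) {f : ℝ → ℂ} (hf : ContinuousOn f (Icc a b)) :
    supNormOn (wInterp ξ a b κ c f) (Icc a b)
      ≤ lebesgueConst ξ * supNormOn f (Icc a b) := by
  have hΛ0 := lebesgueConst_nonneg ξ hξ
  set W : ℝ → ℂ := fun t =>
    Complex.exp (-(Complex.I * (κ:ℂ) * (c:ℂ) * ((phiAB a b t : ℝ):ℂ))) * f (phiAB a b t)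
    with hW
  have hphicont : Continuous (fun t : ℝ => phiAB a b t) := by
    unfold phiAB
    exact continuous_const.add (continuous_const.mul continuous_id)
  have hWcont : ContinuousOn W (Icc (-1:ℝ) 1) := by
    rw [hW]
    apply ContinuousOn.mul
    · apply Continuous.continuousOn
      apply Complex.continuous_exp.comp
      exact (continuous_const.mul (Complex.continuous_ofReal.comp hphicont)).neg
    · exact hf.comp hphicont.continuousOn (fun t ht => phiAB_mem (le_of_lt hab) ht)
  apply supNormOn_le (mul_nonneg hΛ0 (supNormOn_nonneg _ _))
  intro x hx
  unfold wInterp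
  rw [interpOn_eq, map_mul, abs_exp_I_mul, one_mul]
  have hstep : Complex.abs (interpC ξ W (phiInvAB a b x))
      ≤ supNormOn (interpC ξ W) (Icc (-1) 1) :=
    le_supNormOn (bddAbove_absImage (continuous_interpC ξ W).continuousOn)
      (phiInvAB_mem hab hx)
  refine le_trans hstep ?_
  refine le_trans (interpC_le_lebesgue ξ hξ hWcont) ?_
  apply mul_le_mul_of_nonneg_left _ hΛ0
  apply supNormOn_le (supNormOn_nonneg _ _)
  intro s hs
  rw [hW]
  simp only
  rw [map_mul, abs_exp_neg_I_mul, one_mul]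
  exact le_supNormOn (bddAbove_absImage hf) (phiAB_mem (le_of_lt hab) hs)

/-! ### the master induction -/

lemma master {m : ℕ} (ξ : Fin (m+1) → ℝ) (hξ : ∀ ν, ξ ν ∈ Icc (-1:ℝ) 1)
    (hinj : Function.Injective ξ)
    (L : ℕ) (A B : ℕ → ℝ) (hab : ∀ ℓ ≤ L, A ℓ < B ℓ)
    (hnest : ∀ ℓ, 1 ≤ ℓ → ℓ ≤ L → Icc (A ℓ) (B ℓ) ⊆ Icc (A (ℓ-1)) (B (ℓ-1)))
    (qbar q γ : ℝ) (hγ0 : 0 ≤ γ) (hq0 : 0 ≤ q)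
    (hq : ∀ ℓ, 1 ≤ ℓ → ℓ ≤ L → (B ℓ - A ℓ)/(B (ℓ-1) - A (ℓ-1)) ≤ qbar)
    (κ : ℝ) (c : ℕ → ℝ)
    (hγc : ∀ ℓ, 1 ≤ ℓ → ℓ ≤ L →
      |κ * ((B (ℓ-1) - A (ℓ-1))/2) * (c (ℓ-1) - c ℓ)| ≤ γ)
    (R : ℝ) (hR : 2 ≤ R) (n : ℕ) (hn : 1 ≤ n)
    (hnum : R/(R-1) * Real.exp (γ*R) * (2*qbar*R+3)^m * (2/((2*R-1)^n - 1))^((m+1)/n) ≤ q^m)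
    (π : Polynomial ℂ) (hdeg : π.natDegree ≤ m) :
    ∀ ℓ, ℓ ≤ L → ∃ p : Polynomial ℂ, p.natDegree ≤ m ∧
      (∀ x : ℝ,
        iterW ξ A B κ c ℓ
          (fun y => Complex.exp (Complex.I * (κ:ℂ) * ((c 0 : ℝ):ℂ) * (y:ℂ)) * π.eval (y:ℂ)) x
        = Complex.exp (Complex.I * (κ:ℂ) * ((c ℓ : ℝ):ℂ) * (x:ℂ)) * p.eval (x:ℂ)) ∧
      (∀ x ∈ Icc (A ℓ) (B ℓ),
        Complex.abs
          (Complex.exp (Complex.I * (κ:ℂ) * ((c 0 : ℝ):ℂ) * (x:ℂ)) * π.eval (x:ℂ)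
          - iterW ξ A B κ c ℓ
              (fun y => Complex.exp (Complex.I * (κ:ℂ) * ((c 0 : ℝ):ℂ) * (y:ℂ)) * π.eval (y:ℂ)) x)
        ≤ ((1 + (1 + lebesgueConst ξ) * q^m)^ℓ - 1) *
            supNormOn
              (fun y : ℝ =>
                Complex.exp (Complex.I * (κ:ℂ) * ((c 0 : ℝ):ℂ) * (y:ℂ)) * π.eval (y:ℂ))
              (Icc (A 0) (B 0))) := by
  have hΛ0 := lebesgueConst_nonneg ξ hξ
  set Λ : ℝ := lebesgueConst ξ with hΛ
  set u₀ : ℝ → ℂ :=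
    fun y => Complex.exp (Complex.I * (κ:ℂ) * ((c 0 : ℝ):ℂ) * (y:ℂ)) * π.eval (y:ℂ) with hu₀
  set δq : ℝ := (1 + Λ) * q^m with hδq
  have hδq0 : 0 ≤ δq := by
    rw [hδq]
    exact mul_nonneg (by linarith) (pow_nonneg hq0 m)
  set M₀ : ℝ := supNormOn u₀ (Icc (A 0) (B 0)) with hM₀
  have hM₀0 : 0 ≤ M₀ := supNormOn_nonneg _ _
  have hu₀cont : Continuous u₀ := contExpPoly κ (c 0) π
  intro ℓ
  induction ℓ with
  | zero =>
    intro _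
    refine ⟨π, hdeg, fun x => rfl, ?_⟩
    intro x _
    simp only [iterW]
    rw [sub_self, map_zero, pow_zero]
    simp
  | succ i ih =>
    intro hL
    obtain ⟨pi, hpideg, hpistr, hpierr⟩ := ih (by omega)
    have hsub1 : Icc (A (i+1)) (B (i+1)) ⊆ Icc (A i) (B i) := by
      have h2 := hnest (i+1) (by omega) hL
      simpa using h2
    have hsubM : ∀ j ≤ i+1, Icc (A (i+1)) (B (i+1)) ⊆ Icc (A j) (B j) :=
      fun j hj => nestIcc L A B hnest (i+1) hL j hj
    have hsubi0 : Icc (A i) (B i) ⊆ Icc (A 0) (B 0) :=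
      nestIcc L A B hnest i (by omega) 0 (by omega)
    obtain ⟨pnew, hpnewdeg, hpnewstr⟩ := wInterp_poly ξ hinj (hab (i+1) hL) κ (c (i+1))
      (iterW ξ A B κ c i u₀)
    refine ⟨pnew, hpnewdeg, ?_, ?_⟩
    · intro x
      simp only [iterW]
      exact hpnewstr x
    -- the error estimate
    have hvfun : iterW ξ A B κ c i u₀
        = fun y : ℝ => Complex.exp (Complex.I * (κ:ℂ) * ((c i : ℝ):ℂ) * (y:ℂ)) * pi.eval (y:ℂ) :=
      funext hpistr
    -- sup bound on the intermediate polynomial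
    have hvsup : supNormOn (fun y : ℝ => pi.eval (y:ℂ)) (Icc (A i) (B i))
        ≤ (1 + δq)^i * M₀ := by
      apply supNormOn_le (mul_nonneg (pow_nonneg (by linarith) i) hM₀0)
      intro y hy
      have h1 : Complex.abs (pi.eval (y:ℂ))
          = Complex.abs (iterW ξ A B κ c i u₀ y) := by
        rw [hvfun]
        simp only
        rw [map_mul, abs_exp_I_mul, one_mul]
      rw [h1]
      have h2 : Complex.abs (iterW ξ A B κ c i u₀ y)
          ≤ Complex.abs (u₀ y) + Complex.abs (u₀ y - iterW ξ A B κ c i u₀ y) := by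
        have h3 := Complex.abs.add_le (u₀ y) (-(u₀ y - iterW ξ A B κ c i u₀ y))
        rw [map_neg_eq_map] at h3
        calc Complex.abs (iterW ξ A B κ c i u₀ y)
            = Complex.abs (u₀ y + -(u₀ y - iterW ξ A B κ c i u₀ y)) := by congr 1; ring
          _ ≤ _ := h3
      refine le_trans h2 ?_
      have h4 : Complex.abs (u₀ y) ≤ M₀ :=
        le_supNormOn (bddAbove_absImage hu₀cont.continuousOn) (hsubi0 hy)
      have h5 := hpierr y hy
      have hpow1 : (1:ℝ) ≤ (1 + δq)^i := one_le_pow₀ (by linarith)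
      nlinarith [h5, h4]
    -- key step
    have hkey : ∀ x ∈ Icc (A (i+1)) (B (i+1)),
        Complex.abs (iterW ξ A B κ c i u₀ x
            - wInterp ξ (A (i+1)) (B (i+1)) κ (c (i+1)) (iterW ξ A B κ c i u₀) x)
        ≤ δq * ((1 + δq)^i * M₀) := by
      intro x hx
      have hγci : |κ * ((B i - A i)/2) * (c i - c (i+1))| ≤ γ := by
        have := hγc (i+1) (by omega) hL
        simpa using this
      have hqi : (B (i+1) - A (i+1))/(B i - A i) ≤ qbar := by
        have := hq (i+1) (by omega) hL
        simpa using this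
      have hks := keyStep ξ hξ hinj (A (i+1)) (B (i+1)) (A i) (B i)
        (hab (i+1) hL) (hab i (by omega)) hsub1 qbar hqi κ (c i) (c (i+1)) γ hγ0 hγci
        R hR n hn pi hpideg x hx
      rw [← hvfun] at hks
      have hvx : iterW ξ A B κ c i u₀ x
          = Complex.exp (Complex.I * (κ:ℂ) * ((c i : ℝ):ℂ) * (x:ℂ)) * pi.eval (x:ℂ) :=
        hpistr x
      rw [← hvx] at hks
      refine le_trans hks ?_
      calc (1 + Λ) *
            (R/(R-1) * Real.exp (γ*R) * (2*qbar*R+3)^m * (2/((2*R-1)^n - 1))^((m+1)/n)) *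
            supNormOn (fun y : ℝ => pi.eval (y:ℂ)) (Icc (A i) (B i))
          ≤ (1 + Λ) * q^m * ((1 + δq)^i * M₀) := by
            apply mul_le_mul _ hvsup (supNormOn_nonneg _ _)
              (mul_nonneg (by linarith) (pow_nonneg hq0 m))
            exact mul_le_mul_of_nonneg_left hnum (by linarith)
        _ = δq * ((1 + δq)^i * M₀) := by rw [hδq]
    intro x hx
    have herr1 : Complex.abs (u₀ x - iterW ξ A B κ c i u₀ x) ≤ ((1 + δq)^i - 1) * M₀ :=
      hpierr x (hsub1 hx)
    have herr2 := hkey x hx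
    have htri : Complex.abs (u₀ x - iterW ξ A B κ c (i+1) u₀ x)
        ≤ Complex.abs (u₀ x - iterW ξ A B κ c i u₀ x)
          + Complex.abs (iterW ξ A B κ c i u₀ x - iterW ξ A B κ c (i+1) u₀ x) :=
      Complex.abs.sub_le _ _ _
    have hit : iterW ξ A B κ c (i+1) u₀ x
        = wInterp ξ (A (i+1)) (B (i+1)) κ (c (i+1)) (iterW ξ A B κ c i u₀) x := rfl
    rw [hit] at htri
    refine le_trans htri ?_
    refine le_trans (add_le_add herr1 herr2) ?_
    have : ((1 + δq)^i - 1) * M₀ + δq * ((1 + δq)^i * M₀)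
        = ((1 + δq)^(i+1) - 1) * M₀ := by
      rw [pow_succ]
      ring
    rw [this]

/-- stability of reinterpolation: for `q ∈ (q̄,1)` there is `m₀`,
depending only on `γ, q̄, q`, such that for all `m ≥ m₀`, with
`ε_{m,L} = (1+(1+Λ_m)q^m)^L − 1`:
(a) `‖(I − 𝕀_L∘⋯∘𝕀₁)[exp(iκc₀·)π]‖_{∞,J_L} ≤ ε_{m,L}‖exp(iκc₀·)π‖_{∞,J₀}` for `π ∈ Π_m`;
(b) `‖𝕀_L∘⋯∘𝕀₀‖_{C(J₀)→C(J_L)} ≤ Λ_m(1+ε_{m,L})`. -/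
theorem stmt16 (qbar q γ : ℝ) (hqbar : 0 < qbar) (hq1 : qbar < q) (hq2 : q < 1)
    (hγ : 0 ≤ γ) :
    ∃ m₀ : ℕ, 0 < m₀ ∧
      ∀ (ξ : (m : ℕ) → Fin (m + 1) → ℝ),
        (∀ m ν, ξ m ν ∈ Set.Icc (-1 : ℝ) 1) →
        (∀ m, Function.Injective (ξ m)) →
        ∀ (L : ℕ) (A B : ℕ → ℝ), (∀ ℓ ≤ L, A ℓ < B ℓ) →
          (∀ ℓ, 1 ≤ ℓ → ℓ ≤ L →
            Set.Icc (A ℓ) (B ℓ) ⊆ Set.Icc (A (ℓ - 1)) (B (ℓ - 1))) →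
          (∀ ℓ, 1 ≤ ℓ → ℓ ≤ L → (B ℓ - A ℓ) / (B (ℓ - 1) - A (ℓ - 1)) ≤ qbar) →
          ∀ (κ : ℝ) (c : ℕ → ℝ),
            (∀ ℓ, 1 ≤ ℓ → ℓ ≤ L →
              |κ * ((B (ℓ - 1) - A (ℓ - 1)) / 2) * (c (ℓ - 1) - c ℓ)| ≤ γ) →
            ∀ m : ℕ, m₀ ≤ m →
              (∀ π : Polynomial ℂ, π.natDegree ≤ m →
                supNormOn (fun x =>
                    Complex.exp (Complex.I * (κ : ℂ) * (c 0 : ℂ) * (x : ℂ)) * π.eval (x : ℂ) -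
                    iterW (ξ m) A B κ c L
                      (fun y => Complex.exp (Complex.I * (κ : ℂ) * (c 0 : ℂ) * (y : ℂ)) *
                        π.eval (y : ℂ)) x)
                  (Set.Icc (A L) (B L))
                ≤ ((1 + (1 + lebesgueConst (ξ m)) * q ^ m) ^ L - 1) *
                  supNormOn (fun x =>
                      Complex.exp (Complex.I * (κ : ℂ) * (c 0 : ℂ) * (x : ℂ)) * π.eval (x : ℂ))
                    (Set.Icc (A 0) (B 0))) ∧
              (∀ f : ℝ → ℂ, ContinuousOn f (Set.Icc (A 0) (B 0)) →
                supNormOn (iterW (ξ m) A B κ c L (wInterp (ξ m) (A 0) (B 0) κ (c 0) f))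
                    (Set.Icc (A L) (B L))
                ≤ lebesgueConst (ξ m) * (1 + ((1 + (1 + lebesgueConst (ξ m)) * q ^ m) ^ L - 1)) *
                  supNormOn f (Set.Icc (A 0) (B 0))) := by
  obtain ⟨R, n, m₀, hR2, hn1, hm₀1, hspec⟩ := chooseConst qbar q γ hqbar hq1 hq2 hγ
  refine ⟨m₀, by omega, ?_⟩
  intro ξ hξmem hξinj L A B hab hnest hqr κ c hγc m hm
  obtain ⟨hnm, hnum⟩ := hspec m hm
  have hq0 : (0:ℝ) ≤ q := by linarith
  have hΛ0 := lebesgueConst_nonneg (ξ m) (hξmem m)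
  have hδ1 : (1:ℝ) ≤ 1 + (1 + lebesgueConst (ξ m)) * q ^ m := by
    nlinarith [pow_nonneg hq0 m]
  have hεL0 : 0 ≤ (1 + (1 + lebesgueConst (ξ m)) * q ^ m) ^ L - 1 := by
    nlinarith [one_le_pow₀ (n := L) hδ1]
  constructor
  · intro p hdeg
    obtain ⟨pL, hpLdeg, hpLstr, hperr⟩ := master (ξ m) (hξmem m) (hξinj m) L A B hab hnest
      qbar q γ hγ hq0 hqr κ c hγc R hR2 n hn1 hnum p hdeg L le_rfl
    apply supNormOn_le (mul_nonneg hεL0 (supNormOn_nonneg _ _))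
    intro x hx
    exact hperr x hx
  · intro f hf
    obtain ⟨p₀, hp₀deg, hp₀⟩ := wInterp_poly (ξ m) (hξinj m) (hab 0 (Nat.zero_le L)) κ (c 0) f
    have hfun : wInterp (ξ m) (A 0) (B 0) κ (c 0) f
        = fun y : ℝ =>
            Complex.exp (Complex.I * (κ:ℂ) * ((c 0 : ℝ):ℂ) * (y:ℂ)) * p₀.eval (y:ℂ) :=
      funext hp₀
    obtain ⟨pL, hpLdeg, hpLstr, hperr⟩ := master (ξ m) (hξmem m) (hξinj m) L A B hab hnest
      qbar q γ hγ hq0 hqr κ c hγc R hR2 n hn1 hnum p₀ hp₀deg L le_rfl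
    have hM₀ : supNormOn
        (fun y : ℝ =>
          Complex.exp (Complex.I * (κ:ℂ) * ((c 0 : ℝ):ℂ) * (y:ℂ)) * p₀.eval (y:ℂ))
        (Icc (A 0) (B 0)) ≤ lebesgueConst (ξ m) * supNormOn f (Icc (A 0) (B 0)) := by
      rw [← hfun]
      exact wInterp_norm (ξ m) (hξmem m) (hab 0 (Nat.zero_le L)) κ (c 0) hf
    rw [hfun]
    have hsupf0 : 0 ≤ supNormOn f (Icc (A 0) (B 0)) := supNormOn_nonneg _ _
    apply supNormOn_le
    · apply mul_nonneg (mul_nonneg hΛ0 (by nlinarith)) hsupf0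
    intro x hx
    set u₀ : ℝ → ℂ := fun y : ℝ =>
      Complex.exp (Complex.I * (κ:ℂ) * ((c 0 : ℝ):ℂ) * (y:ℂ)) * p₀.eval (y:ℂ) with hu₀
    have h1 : Complex.abs (iterW (ξ m) A B κ c L u₀ x)
        ≤ Complex.abs (u₀ x) + Complex.abs (u₀ x - iterW (ξ m) A B κ c L u₀ x) := by
      have h3 := Complex.abs.add_le (u₀ x) (-(u₀ x - iterW (ξ m) A B κ c L u₀ x))
      rw [map_neg_eq_map] at h3
      calc Complex.abs (iterW (ξ m) A B κ c L u₀ x)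
          = Complex.abs (u₀ x + -(u₀ x - iterW (ξ m) A B κ c L u₀ x)) := by congr 1; ring
        _ ≤ _ := h3
    have h2 : Complex.abs (u₀ x) ≤ supNormOn u₀ (Icc (A 0) (B 0)) :=
      le_supNormOn (bddAbove_absImage (contExpPoly κ (c 0) p₀).continuousOn)
        (nestIcc L A B hnest L le_rfl 0 (Nat.zero_le L) hx)
    have h3 := hperr x hx
    have hM₀0 : 0 ≤ supNormOn u₀ (Icc (A 0) (B 0)) := supNormOn_nonneg _ _
    nlinarith [hM₀, hεL0, hΛ0, hsupf0, h1, h2, h3]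
end

section
/- Fix q̄ ∈ (0,1), q ∈ (q̄,1), q̂ ∈ (q,1), γ ≥ 0, C_Λ > 0 and λ ≥ 1, and assume Λ_m ≤ C_Λ(m+1)^λ for all m ∈ ℕ. Then there exists K > 0, depending only on γ, q̄, q, q̂, C_Λ, and λ, such that for all L ≥ 1 and all m ∈ ℕ with m ≥ K(1 + log L): ε_{m,L} := (1 + (1+Λ_m)q^m)^L − 1 ≤ q̂^m. -/
set_option maxHeartbeats 1000000


open Real

private lemma aux_exp_half_le_two : Real.exp (1/2 : ℝ) ≤ 2 := by
  have h2 : Real.exp (1/2 : ℝ) * Real.exp (1/2 : ℝ) = Real.exp 1 := by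
    rw [← Real.exp_add]; norm_num
  nlinarith [Real.exp_one_lt_d9, Real.exp_pos (1/2 : ℝ)]

private lemma aux_exp_sub_one_le (t : ℝ) : Real.exp t - 1 ≤ t * Real.exp t := by
  have h1 : 1 - t ≤ Real.exp (-t) := by
    have := Real.add_one_le_exp (-t); linarith
  have h2 : Real.exp (-t) * Real.exp t = 1 := by
    rw [← Real.exp_add]; simp
  nlinarith [Real.exp_pos t]

/-- under the stability assumption `1 ≤ Λ_m ≤ C_Λ(m+1)^λ` there is
`K > 0`, depending only on `γ, q̄, q, q̂, C_Λ, λ`, such that for all `L ≥ 1` and all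
`m ≥ K(1 + log L)` one has `ε_{m,L} = (1+(1+Λ_m)q^m)^L − 1 ≤ q̂^m`. -/
theorem stmt17 (qbar q qhat γ CΛ lam : ℝ)
    (hqbar : 0 < qbar) (hqbar1 : qbar < 1)
    (hq1 : qbar < q) (hq2 : q < 1)
    (hqhat1 : q < qhat) (hqhat2 : qhat < 1)
    (hγ : 0 ≤ γ) (hCΛ : 0 < CΛ) (hlam : 1 ≤ lam)
    (Λ : ℕ → ℝ) (hΛ1 : ∀ m, 1 ≤ Λ m)
    (hΛ : ∀ m : ℕ, Λ m ≤ CΛ * ((m : ℝ) + 1) ^ lam) :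
    ∃ K : ℝ, 0 < K ∧
      ∀ L : ℕ, 1 ≤ L →
        ∀ m : ℕ, K * (1 + Real.log L) ≤ (m : ℝ) →
          (1 + (1 + Λ m) * q ^ m) ^ L - 1 ≤ qhat ^ m := by
  have hq0 : 0 < q := lt_trans hqbar hq1
  have hqhat0 : 0 < qhat := lt_trans hq0 hqhat1
  set lq := Real.log q with hlq
  set lh := Real.log qhat with hlh
  have hℓ : 0 < lh - lq := sub_pos.2 (Real.log_lt_log hq0 hqhat1)
  set ℓ := lh - lq with hℓdef
  have hlam0 : (0:ℝ) < lam := lt_of_lt_of_le one_pos hlam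
  set ε := min 1 (ℓ / (4 * lam)) with hεdef
  have hε0 : 0 < ε := lt_min one_pos (by positivity)
  have hε1 : ε ≤ 1 := min_le_left _ _
  have hεl : ε * lam ≤ ℓ / 4 := by
    have h := min_le_right 1 (ℓ / (4 * lam))
    calc ε * lam ≤ (ℓ / (4 * lam)) * lam := mul_le_mul_of_nonneg_right h hlam0.le
    _ = ℓ / 4 := by field_simp
  set A := 2 * CΛ * ε ^ (-lam) with hAdef
  have hεpow : (0:ℝ) < ε ^ (-lam) := Real.rpow_pos_of_pos hε0 _
  have hA0 : 0 < A := by positivity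
  set K := max 1 (max (4 / ℓ) (2 * Real.log (2 * A) / ℓ)) with hKdef
  have hK1 : (1:ℝ) ≤ K := le_max_left _ _
  have hK0 : (0:ℝ) < K := lt_of_lt_of_le one_pos hK1
  refine ⟨K, hK0, ?_⟩
  intro L hL m hm
  have hL1 : (1:ℝ) ≤ (L:ℝ) := by exact_mod_cast hL
  have hlogL : 0 ≤ Real.log L := Real.log_nonneg hL1
  have hKm : K ≤ (m:ℝ) := by
    refine le_trans ?_ hm
    calc K = K * 1 := (mul_one K).symm
    _ ≤ K * (1 + Real.log L) := mul_le_mul_of_nonneg_left (by linarith) hK0.le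
  have hm0 : (0:ℝ) ≤ (m:ℝ) := le_trans (le_of_lt hK0) hKm
  -- L ≤ exp(m/K)
  have hLle : (L:ℝ) ≤ Real.exp ((m:ℝ) / K) := by
    have h1 : Real.log L ≤ (m:ℝ) / K := by
      rw [le_div_iff₀ hK0]
      have h2 : K * Real.log L ≤ K * (1 + Real.log L) :=
        mul_le_mul_of_nonneg_left (by linarith) hK0.le
      nlinarith
    calc (L:ℝ) = Real.exp (Real.log L) := (Real.exp_log (by linarith)).symm
    _ ≤ _ := Real.exp_le_exp.2 h1
  -- exp(m/K) ≤ exp(m*ℓ/4)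
  have hK4 : 4 / ℓ ≤ K := le_trans (le_max_left _ _) (le_max_right _ _)
  have hmK : Real.exp ((m:ℝ) / K) ≤ Real.exp ((m:ℝ) * ℓ / 4) := by
    apply Real.exp_le_exp.2
    rw [div_le_div_iff₀ hK0 (by norm_num : (0:ℝ) < 4)]
    have h4 : 4 ≤ K * ℓ := by
      rw [div_le_iff₀ hℓ] at hK4; linarith
    nlinarith [mul_le_mul_of_nonneg_left h4 hm0]
  -- polynomial bound
  have hpoly : ((m:ℝ) + 1) ^ lam ≤ ε ^ (-lam) * Real.exp ((m:ℝ) * ℓ / 4) := by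
    have h1 : ε * ((m:ℝ) + 1) ≤ Real.exp (ε * (m:ℝ)) := by
      have h0 := Real.add_one_le_exp (ε * (m:ℝ))
      have h0' : ε * ((m:ℝ) + 1) = ε * (m:ℝ) + ε := by ring
      linarith
    have h2 : (m:ℝ) + 1 ≤ ε⁻¹ * Real.exp (ε * (m:ℝ)) := by
      calc (m:ℝ) + 1 = ε⁻¹ * (ε * ((m:ℝ) + 1)) := by field_simp
      _ ≤ ε⁻¹ * Real.exp (ε * (m:ℝ)) := by
            apply mul_le_mul_of_nonneg_left h1 (by positivity)
    calc ((m:ℝ) + 1) ^ lam ≤ (ε⁻¹ * Real.exp (ε * (m:ℝ))) ^ lam :=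
          Real.rpow_le_rpow (by positivity) h2 hlam0.le
    _ = ε ^ (-lam) * Real.exp (ε * (m:ℝ)) ^ lam := by
          rw [Real.mul_rpow (by positivity) (Real.exp_nonneg _),
            Real.inv_rpow hε0.le, Real.rpow_neg hε0.le]
    _ = ε ^ (-lam) * Real.exp (ε * (m:ℝ) * lam) := by rw [← Real.exp_mul]
    _ ≤ ε ^ (-lam) * Real.exp ((m:ℝ) * ℓ / 4) := by
          apply mul_le_mul_of_nonneg_left _ hεpow.le
          apply Real.exp_le_exp.2
          calc ε * (m:ℝ) * lam = (m:ℝ) * (ε * lam) := by ring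
          _ ≤ (m:ℝ) * (ℓ / 4) := mul_le_mul_of_nonneg_left hεl hm0
          _ = (m:ℝ) * ℓ / 4 := by ring
  -- q^m and qhat^m as exponentials
  have hqm : q ^ m = Real.exp ((m:ℝ) * lq) := by
    rw [hlq, Real.exp_nat_mul, Real.exp_log hq0]
  have hqhatm : qhat ^ m = Real.exp ((m:ℝ) * lh) := by
    rw [hlh, Real.exp_nat_mul, Real.exp_log hqhat0]
  have hqm0 : 0 ≤ q ^ m := by positivity
  -- the core quantity
  set x := (1 + Λ m) * q ^ m with hxdef
  have hΛm := hΛ1 m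
  have hΛm2 := hΛ m
  have hx0 : 0 ≤ x := by
    apply mul_nonneg _ hqm0; linarith
  set t := (L:ℝ) * x with htdef
  have ht0 : 0 ≤ t := mul_nonneg (by linarith) hx0
  -- bound on t
  have hpow0 : (0:ℝ) < ((m:ℝ) + 1) ^ lam := Real.rpow_pos_of_pos (by positivity) _
  have ht1 : t ≤ A * Real.exp ((m:ℝ) * (lh + lq) / 2) := by
    have hx1 : x ≤ 2 * CΛ * ((m:ℝ) + 1) ^ lam * q ^ m := by
      apply mul_le_mul_of_nonneg_right _ hqm0
      calc 1 + Λ m ≤ 2 * (CΛ * ((m:ℝ) + 1) ^ lam) := by linarith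
      _ = 2 * CΛ * ((m:ℝ) + 1) ^ lam := by ring
    calc t ≤ Real.exp ((m:ℝ) / K) * (2 * CΛ * ((m:ℝ) + 1) ^ lam * q ^ m) := by
          apply mul_le_mul hLle hx1 hx0 (Real.exp_nonneg _)
    _ ≤ Real.exp ((m:ℝ) * ℓ / 4) *
          (2 * CΛ * (ε ^ (-lam) * Real.exp ((m:ℝ) * ℓ / 4)) * Real.exp ((m:ℝ) * lq)) := by
          rw [hqm]
          apply mul_le_mul hmK _ (by positivity) (Real.exp_nonneg _)
          apply mul_le_mul_of_nonneg_right _ (Real.exp_nonneg _)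
          apply mul_le_mul_of_nonneg_left hpoly (by positivity)
    _ = A * (Real.exp ((m:ℝ) * ℓ / 4) * Real.exp ((m:ℝ) * ℓ / 4) * Real.exp ((m:ℝ) * lq)) := by
          rw [hAdef]; ring
    _ = A * Real.exp ((m:ℝ) * (lh + lq) / 2) := by
          rw [← Real.exp_add, ← Real.exp_add]
          congr 1
          rw [hℓdef]; ring
  have hKA : 2 * Real.log (2 * A) / ℓ ≤ K := le_trans (le_max_right _ _) (le_max_right _ _)
  have ht2 : A * Real.exp ((m:ℝ) * (lh + lq) / 2) ≤ (1/2) * qhat ^ m := by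
    rw [hqhatm]
    have h1 : Real.log (2 * A) ≤ (m:ℝ) * ℓ / 2 := by
      rw [div_le_iff₀ hℓ] at hKA
      nlinarith [mul_le_mul_of_nonneg_right hKm hℓ.le]
    have h2 : 2 * A ≤ Real.exp ((m:ℝ) * ℓ / 2) := by
      calc 2 * A = Real.exp (Real.log (2 * A)) := (Real.exp_log (by positivity)).symm
      _ ≤ _ := Real.exp_le_exp.2 h1
    have h3 : Real.exp ((m:ℝ) * ℓ / 2) * Real.exp ((m:ℝ) * (lh + lq) / 2)
        = Real.exp ((m:ℝ) * lh) := by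
      rw [← Real.exp_add]; congr 1; rw [hℓdef]; ring
    have h4 : 2 * A * Real.exp ((m:ℝ) * (lh + lq) / 2)
        ≤ Real.exp ((m:ℝ) * ℓ / 2) * Real.exp ((m:ℝ) * (lh + lq) / 2) :=
      mul_le_mul_of_nonneg_right h2 (Real.exp_pos _).le
    rw [h3] at h4
    linarith
  have hqhatm1 : qhat ^ m ≤ 1 := pow_le_one₀ hqhat0.le hqhat2.le
  have ht3 : t ≤ (1/2) * qhat ^ m := le_trans ht1 ht2
  have ht4 : t ≤ 1/2 := by
    have : (1/2 : ℝ) * qhat ^ m ≤ 1/2 * 1 := by linarith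
    linarith
  -- (1+x)^L ≤ exp t
  have hpowle : (1 + x) ^ L ≤ Real.exp t := by
    calc (1 + x) ^ L ≤ Real.exp x ^ L := by
          apply pow_le_pow_left₀ (by linarith) _ L
          have := Real.add_one_le_exp x; linarith
    _ = Real.exp ((L:ℝ) * x) := (Real.exp_nat_mul x L).symm
  -- exp t - 1 ≤ 2 t
  have hexpt : Real.exp t ≤ 2 :=
    le_trans (Real.exp_le_exp.2 ht4) aux_exp_half_le_two
  have hfin : Real.exp t - 1 ≤ t * Real.exp t := aux_exp_sub_one_le t
  calc (1 + (1 + Λ m) * q ^ m) ^ L - 1 = (1 + x) ^ L - 1 := by rw [hxdef]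
  _ ≤ Real.exp t - 1 := by linarith
  _ ≤ t * Real.exp t := hfin
  _ ≤ (1/2 * qhat ^ m) * 2 := by
        apply mul_le_mul ht3 hexpt (Real.exp_pos t).le (by positivity)
  _ = qhat ^ m := by ring
end
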